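/- arXiv:1006.0505 — 4 statements merged into one kernel-verified Lean document; each statement's English description precedes it below -/
import Mathlib

section
/- For every real p > -1/2 one has Γ(1/2)·Γ(p+1/2) ≥ (1 + p²/2)·Γ((p+1)/2)², with equality if and only if p = 0 or p = 2. In particular, Γ(1/2)·Γ(p+1/2) − Γ((p+1)/2)² > 0 for all p ∈ (-1/2,∞) with p ≠ 0, so that a_p is well defined; moreover a_p ∈ (0,1) for all p ∈ (-1/2,∞) \ {0,2}, and a_2 = 1. -/
open Real Set

/-- `a_p` for `p ∈ (-1/2, ∞)`: for `p ≠ 0` it is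
`|p|·Γ((p+1)/2) / (√2·√(Γ(1/2)·Γ(p+1/2) − Γ((p+1)/2)²))`, and `a_0 := 2/π`. -/
noncomputable def aP (p : ℝ) : ℝ :=
  if p = 0 then 2 / Real.pi
  else |p| * Real.Gamma ((p + 1) / 2) /
    (Real.sqrt 2 *
      Real.sqrt (Real.Gamma (1 / 2) * Real.Gamma (p + 1 / 2) - Real.Gamma ((p + 1) / 2) ^ 2))

open Real Set MeasureTheory

noncomputable def Jv (s : ℝ) : ℝ := 2 ^ ((s - 1) / 2) * Real.Gamma ((s + 1) / 2)

lemma Jv_pos {s : ℝ} (hs : -1 < s) : 0 < Jv s :=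
  mul_pos (rpow_pos_of_pos two_pos _) (Real.Gamma_pos_of_pos (by linarith))

lemma Jint {s : ℝ} (hs : -1 < s) :
    IntegrableOn (fun x : ℝ => x ^ s * Real.exp (-(1/2) * x ^ (2:ℝ))) (Ioi 0) := by
  have h := integrableOn_rpow_mul_exp_neg_mul_rpow hs two_pos (by norm_num : (0:ℝ) < 1/2)
  simpa using h

lemma Jeq {s : ℝ} (hs : -1 < s) :
    ∫ x in Ioi (0:ℝ), x ^ s * Real.exp (-(1/2) * x ^ (2:ℝ)) = Jv s := by
  have h := integral_rpow_mul_exp_neg_mul_rpow two_pos hs (by norm_num : (0:ℝ) < 1/2)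
  simp only [neg_mul] at h ⊢
  rw [h]
  have h1 : ((1:ℝ)/2) ^ (-(s+1)/2) = (2:ℝ) ^ ((s+1)/2) := by
    rw [one_div, Real.inv_rpow zero_le_two, ← Real.rpow_neg zero_le_two,
      show -(-(s+1)/2) = (s+1)/2 from by ring]
  have h2 : ((1:ℝ)/2) = (2:ℝ) ^ (-1 : ℝ) := by
    rw [Real.rpow_neg_one]; norm_num
  rw [h1, mul_comm ((2:ℝ) ^ ((s+1)/2)), mul_assoc, h2, ← mul_assoc,
    ← Real.rpow_add two_pos, show (-1:ℝ) + (s+1)/2 = (s-1)/2 from by ring]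
  rfl

lemma Jv_two : Jv 2 = Jv 0 := by
  unfold Jv
  rw [show ((2:ℝ)+1)/2 = 1/2 + 1 by norm_num, Real.Gamma_add_one (by norm_num),
    show ((2:ℝ)-1)/2 = (0-1)/2 + 1 by norm_num, Real.rpow_add two_pos, Real.rpow_one]
  ring

lemma Jv_four : Jv 4 = 3 * Jv 0 := by
  unfold Jv
  rw [show ((4:ℝ)+1)/2 = 3/2 + 1 by norm_num, Real.Gamma_add_one (by norm_num),
    show (3/2:ℝ) = 1/2 + 1 by norm_num, Real.Gamma_add_one (by norm_num),
    show ((4:ℝ)-1)/2 = (0-1)/2 + 1 + 1 by norm_num, Real.rpow_add two_pos,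
    Real.rpow_add two_pos, Real.rpow_one]
  ring

lemma Jv_rec {p : ℝ} (hp : p ≠ -1) : Jv (p+2) = (p+1) * Jv p := by
  unfold Jv
  rw [show (p+2+1)/2 = (p+1)/2 + 1 by ring, Real.Gamma_add_one (by
    intro h; apply hp; linarith [(div_eq_zero_iff.mp h)]),
    show (p+2-1)/2 = (p-1)/2 + 1 by ring, Real.rpow_add two_pos, Real.rpow_one]
  ring

lemma Jv_sq (p : ℝ) : (Jv p) ^ 2 = 2 ^ (p-1) * Real.Gamma ((p+1)/2) ^ 2 := by
  unfold Jv
  rw [mul_pow, ← Real.rpow_natCast ((2:ℝ) ^ ((p-1)/2)) 2, ← Real.rpow_mul zero_le_two]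
  norm_num

lemma Jv_mul (p : ℝ) : Jv (2*p) * Jv 0 =
    2 ^ (p-1) * (Real.Gamma (1/2) * Real.Gamma (p + 1/2)) := by
  unfold Jv
  rw [show (2*p+1)/2 = p + 1/2 by ring, show ((0:ℝ)+1)/2 = 1/2 by norm_num]
  rw [mul_mul_mul_comm, ← Real.rpow_add two_pos,
    show (2*p-1)/2 + ((0:ℝ)-1)/2 = p - 1 by ring]
  ring

lemma int6 {f1 f2 f3 f4 f5 f6 : ℝ → ℝ}
    (h1 : IntegrableOn f1 (Ioi 0)) (h2 : IntegrableOn f2 (Ioi 0))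
    (h3 : IntegrableOn f3 (Ioi 0)) (h4 : IntegrableOn f4 (Ioi 0))
    (h5 : IntegrableOn f5 (Ioi 0)) (h6 : IntegrableOn f6 (Ioi 0)) :
    ∫ x in Ioi (0:ℝ), (f1 x + f2 x + f3 x + f4 x + f5 x + f6 x)
      = (∫ x in Ioi (0:ℝ), f1 x) + (∫ x in Ioi (0:ℝ), f2 x) + (∫ x in Ioi (0:ℝ), f3 x)
        + (∫ x in Ioi (0:ℝ), f4 x) + (∫ x in Ioi (0:ℝ), f5 x) + (∫ x in Ioi (0:ℝ), f6 x) := by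
  have a2 : IntegrableOn (fun x => f1 x + f2 x) (Ioi 0) := h1.add h2
  have a3 : IntegrableOn (fun x => f1 x + f2 x + f3 x) (Ioi 0) := a2.add h3
  have a4 : IntegrableOn (fun x => f1 x + f2 x + f3 x + f4 x) (Ioi 0) := a3.add h4
  have a5 : IntegrableOn (fun x => f1 x + f2 x + f3 x + f4 x + f5 x) (Ioi 0) := a4.add h5
  rw [integral_add a5 h6, integral_add a4 h5, integral_add a3 h4, integral_add a2 h3,
    integral_add h1 h2]

/-- The Cauchy–Schwarz defect polynomial. -/
noncomputable def Qf (p : ℝ) (x : ℝ) : ℝ :=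
  2 * Jv 0 * x ^ p - p * Jv p * x ^ 2 + (p - 2) * Jv p

lemma Qexpand (p : ℝ) :
    EqOn (fun x : ℝ => (Qf p x)^2 * Real.exp (-(1/2) * x ^ (2:ℝ)))
      (fun x : ℝ =>
        4*(Jv 0)^2 * (x ^ (2*p) * Real.exp (-(1/2) * x ^ (2:ℝ)))
        + (-(4*Jv 0*p*Jv p)) * (x ^ (p+2) * Real.exp (-(1/2) * x ^ (2:ℝ)))
        + (4*Jv 0*(p-2)*Jv p) * (x ^ p * Real.exp (-(1/2) * x ^ (2:ℝ)))
        + p^2*(Jv p)^2 * (x ^ (4:ℝ) * Real.exp (-(1/2) * x ^ (2:ℝ)))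
        + (-(2*p*(p-2)*(Jv p)^2)) * (x ^ (2:ℝ) * Real.exp (-(1/2) * x ^ (2:ℝ)))
        + (p-2)^2*(Jv p)^2 * (x ^ (0:ℝ) * Real.exp (-(1/2) * x ^ (2:ℝ)))) (Ioi 0) := by
  intro x hx
  have hx0 : (0:ℝ) < x := hx
  have e1 : x ^ (2*p) = (x ^ p)^2 := by
    rw [← Real.rpow_natCast (x ^ p) 2, ← Real.rpow_mul hx0.le]
    norm_num [mul_comm]
  have e22 : x ^ (2:ℝ) = x ^ (2:ℕ) := by
    rw [show (2:ℝ) = ((2:ℕ):ℝ) by norm_num, Real.rpow_natCast]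
  have e2 : x ^ (p+2) = x ^ p * x ^ (2:ℕ) := by
    rw [Real.rpow_add hx0, e22]
  have e4 : x ^ (4:ℝ) = x ^ (4:ℕ) := by
    rw [show (4:ℝ) = ((4:ℕ):ℝ) by norm_num, Real.rpow_natCast]
  simp only [Qf, e1, e2, e4, Real.rpow_zero]
  rw [e22]
  ring

lemma Qint (p : ℝ) (hp : -1/2 < p) :
    IntegrableOn (fun x : ℝ => (Qf p x)^2 * Real.exp (-(1/2) * x ^ (2:ℝ))) (Ioi 0) := by
  have h2p : (-1:ℝ) < 2*p := by linarith
  have hp' : (-1:ℝ) < p := by linarith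
  have hp2 : (-1:ℝ) < p + 2 := by linarith
  have hsum : IntegrableOn (fun x : ℝ =>
        4*(Jv 0)^2 * (x ^ (2*p) * Real.exp (-(1/2) * x ^ (2:ℝ)))
        + (-(4*Jv 0*p*Jv p)) * (x ^ (p+2) * Real.exp (-(1/2) * x ^ (2:ℝ)))
        + (4*Jv 0*(p-2)*Jv p) * (x ^ p * Real.exp (-(1/2) * x ^ (2:ℝ)))
        + p^2*(Jv p)^2 * (x ^ (4:ℝ) * Real.exp (-(1/2) * x ^ (2:ℝ)))
        + (-(2*p*(p-2)*(Jv p)^2)) * (x ^ (2:ℝ) * Real.exp (-(1/2) * x ^ (2:ℝ)))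
        + (p-2)^2*(Jv p)^2 * (x ^ (0:ℝ) * Real.exp (-(1/2) * x ^ (2:ℝ)))) (Ioi 0) :=
    ((((((Jint h2p).const_mul _).add ((Jint hp2).const_mul _)).add
      ((Jint hp').const_mul _)).add ((Jint (by norm_num : (-1:ℝ) < 4)).const_mul _)).add
      ((Jint (by norm_num : (-1:ℝ) < 2)).const_mul _)).add
      ((Jint (by norm_num : (-1:ℝ) < 0)).const_mul _)
  exact hsum.congr_fun (Qexpand p).symm measurableSet_Ioi

lemma int_eq (p : ℝ) (hp : -1/2 < p) :
    ∫ x in Ioi (0:ℝ), (Qf p x)^2 * Real.exp (-(1/2) * x ^ (2:ℝ))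
      = 4*(Jv 0)^2 * Jv (2*p) + (-(4*Jv 0*p*Jv p)) * Jv (p+2) + (4*Jv 0*(p-2)*Jv p) * Jv p
        + p^2*(Jv p)^2 * Jv 4 + (-(2*p*(p-2)*(Jv p)^2)) * Jv 2 + (p-2)^2*(Jv p)^2 * Jv 0 := by
  have h2p : (-1:ℝ) < 2*p := by linarith
  have hp' : (-1:ℝ) < p := by linarith
  have hp2 : (-1:ℝ) < p + 2 := by linarith
  rw [setIntegral_congr_fun measurableSet_Ioi (Qexpand p),
    int6 ((Jint h2p).const_mul _) ((Jint hp2).const_mul _) ((Jint hp').const_mul _)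
      ((Jint (by norm_num : (-1:ℝ) < 4)).const_mul _)
      ((Jint (by norm_num : (-1:ℝ) < 2)).const_mul _)
      ((Jint (by norm_num : (-1:ℝ) < 0)).const_mul _)]
  simp only [integral_const_mul]
  rw [Jeq h2p, Jeq hp2, Jeq hp', Jeq (by norm_num : (-1:ℝ) < 4),
    Jeq (by norm_num : (-1:ℝ) < 2), Jeq (by norm_num : (-1:ℝ) < 0)]

lemma delta_eq (p : ℝ) (hp : -1/2 < p) :
    Real.Gamma (1/2) * Real.Gamma (p + 1/2) - (1 + p^2/2) * Real.Gamma ((p+1)/2)^2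
      = (∫ x in Ioi (0:ℝ), (Qf p x)^2 * Real.exp (-(1/2) * x ^ (2:ℝ)))
        / (2 ^ (p+1) * Jv 0) := by
  have hm : 0 < Jv 0 := Jv_pos (by norm_num)
  have hden : (0:ℝ) < 2 ^ (p+1) * Jv 0 := mul_pos (rpow_pos_of_pos two_pos _) hm
  have h4 : (2:ℝ) ^ (2:ℝ) = 4 := by
    rw [show (2:ℝ) = ((2:ℕ):ℝ) by norm_num, Real.rpow_natCast]; norm_num
  have hpow : (2:ℝ) ^ (p+1) = 4 * 2 ^ (p-1) := by
    rw [show p+1 = (p-1) + (2:ℝ) by ring, Real.rpow_add two_pos, h4]; ring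
  have hmul := Jv_mul p
  have hsq := Jv_sq p
  rw [int_eq p hp, Jv_two, Jv_four, Jv_rec (by intro h; rw [h] at hp; norm_num at hp : p ≠ -1),
    eq_div_iff hden.ne']
  linear_combination (-(4:ℝ)*Jv 0)*hmul + ((2*p^2+4)*Jv 0)*hsq
    + ((Real.Gamma (1/2) * Real.Gamma (p + 1/2)
      - (1 + p^2/2) * Real.Gamma ((p+1)/2)^2)*Jv 0)*hpow
lemma int_pos (p : ℝ) (hp : -1/2 < p) (h0 : p ≠ 0) (h2 : p ≠ 2) :
    0 < ∫ x in Ioi (0:ℝ), (Qf p x)^2 * Real.exp (-(1/2) * x ^ (2:ℝ)) := by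
  rw [setIntegral_pos_iff_support_of_nonneg_ae
    (Filter.Eventually.of_forall (fun x => mul_nonneg (sq_nonneg _) (Real.exp_pos _).le))
    (Qint p hp)]
  by_contra hcon
  have h00 : volume (Function.support
      (fun x : ℝ => (Qf p x)^2 * Real.exp (-(1/2) * x ^ (2:ℝ))) ∩ Ioi 0) = 0 := by
    simpa using (not_lt.mp hcon).antisymm zero_le
  set U : Set ℝ := Ioi 0 ∩ {x | Qf p x ≠ 0} with hU
  have hsub : U ⊆ Function.support
      (fun x : ℝ => (Qf p x)^2 * Real.exp (-(1/2) * x ^ (2:ℝ))) ∩ Ioi 0 := by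
    rintro x ⟨hx1, hx2⟩
    exact ⟨mul_ne_zero (pow_ne_zero 2 hx2) (Real.exp_pos _).ne', hx1⟩
  have hU0 : volume U = 0 := measure_mono_null hsub h00
  have hUopen : IsOpen U := by
    rw [isOpen_iff_mem_nhds]
    intro x hx
    have hcont : ContinuousAt (Qf p) x := by
      unfold Qf
      exact ((continuousAt_const.mul (Real.continuousAt_rpow_const x p
        (Or.inl (ne_of_gt hx.1)))).sub
        (continuousAt_const.mul ((continuous_pow 2).continuousAt))).add continuousAt_const
    exact Filter.inter_mem (Ioi_mem_nhds hx.1)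
      (hcont.preimage_mem_nhds (isOpen_compl_singleton.mem_nhds hx.2))
  have hUempty : U = ∅ := by
    by_contra hne
    exact absurd hU0 (ne_of_gt (hUopen.measure_pos volume (nonempty_iff_ne_empty.mpr hne)))
  have hQ0 : ∀ x : ℝ, 0 < x → Qf p x = 0 := by
    intro x hx
    by_contra h
    exact (eq_empty_iff_forall_notMem.mp hUempty x) ⟨hx, h⟩
  have hder : ∀ x : ℝ, 0 < x →
      2 * Jv 0 * (p * x ^ (p-1)) - p * Jv p * ((2:ℕ) * x ^ (1:ℕ)) = 0 := by
    intro x hx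
    have h1 : HasDerivAt (Qf p)
        (2 * Jv 0 * (p * x ^ (p-1)) - p * Jv p * ((2:ℕ) * x ^ (1:ℕ))) x := by
      have hr : HasDerivAt (fun y : ℝ => y ^ p) (p * x ^ (p-1)) x :=
        Real.hasDerivAt_rpow_const (Or.inl hx.ne')
      have hq : HasDerivAt (fun y : ℝ => y ^ (2:ℕ)) ((2:ℕ) * x ^ (1:ℕ)) x := by
        simpa using hasDerivAt_pow 2 x
      exact ((hr.const_mul (2 * Jv 0)).sub (hq.const_mul (p * Jv p))).add_const ((p - 2) * Jv p)
    have h2' : HasDerivAt (Qf p) 0 x := by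
      have heq : (fun y : ℝ => (0:ℝ)) =ᶠ[nhds x] Qf p :=
        Filter.eventually_of_mem (Ioi_mem_nhds hx) (fun y hy => (hQ0 y hy).symm)
      exact (hasDerivAt_const x 0).congr_of_eventuallyEq heq.symm
    exact h1.unique h2'
  have hm : 0 < Jv 0 := Jv_pos (by norm_num)
  have e1 := hder 1 one_pos
  rw [Real.one_rpow] at e1
  have hmJ : Jv 0 = Jv p := by
    have h' : p * (Jv 0 - Jv p) = 0 := by push_cast at e1; linarith
    rcases mul_eq_zero.mp h' with h'' | h''
    · exact absurd h'' h0
    · linarith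
  have e2 := hder 2 two_pos
  rw [← hmJ] at e2
  have h2' : 2 * p * Jv 0 * ((2:ℝ) ^ (p-1) - 2) = 0 := by push_cast at e2; linarith
  rcases mul_eq_zero.mp h2' with h'' | h''
  · rcases mul_eq_zero.mp h'' with h3 | h3
    · rcases mul_eq_zero.mp h3 with h4 | h4
      · norm_num at h4
      · exact h0 h4
    · exact absurd h3 hm.ne'
  · have hlog : (p - 1) * Real.log 2 = Real.log 2 := by
      have := congrArg Real.log (sub_eq_zero.mp h'')
      rwa [Real.log_rpow two_pos] at this
    have hl2 : Real.log 2 ≠ 0 := (Real.log_pos one_lt_two).ne'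
    apply h2
    have h1 : (p - 1) * Real.log 2 = 1 * Real.log 2 := by linarith
    have := mul_right_cancel₀ hl2 h1
    linarith

lemma main_le' (p : ℝ) (hp : -1/2 < p) :
    (1 + p ^ 2 / 2) * Real.Gamma ((p + 1) / 2) ^ 2 ≤
      Real.Gamma (1 / 2) * Real.Gamma (p + 1 / 2) := by
  have h := delta_eq p hp
  have hm : 0 < Jv 0 := Jv_pos (by norm_num)
  have hden : (0:ℝ) < 2 ^ (p+1) * Jv 0 := mul_pos (rpow_pos_of_pos two_pos _) hm
  have hnn : 0 ≤ ∫ x in Ioi (0:ℝ), (Qf p x)^2 * Real.exp (-(1/2) * x ^ (2:ℝ)) :=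
    setIntegral_nonneg measurableSet_Ioi
      (fun x _ => mul_nonneg (sq_nonneg _) (Real.exp_pos _).le)
  have := div_nonneg hnn hden.le
  linarith

lemma main_lt' (p : ℝ) (hp : -1/2 < p) (h0 : p ≠ 0) (h2 : p ≠ 2) :
    (1 + p ^ 2 / 2) * Real.Gamma ((p + 1) / 2) ^ 2 <
      Real.Gamma (1 / 2) * Real.Gamma (p + 1 / 2) := by
  have h := delta_eq p hp
  have hm : 0 < Jv 0 := Jv_pos (by norm_num)
  have hden : (0:ℝ) < 2 ^ (p+1) * Jv 0 := mul_pos (rpow_pos_of_pos two_pos _) hm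
  have hpos := int_pos p hp h0 h2
  have := div_pos hpos hden
  linarith

lemma eq_at_two' : Real.Gamma (1 / 2) * Real.Gamma ((2:ℝ) + 1 / 2) =
    (1 + (2:ℝ) ^ 2 / 2) * Real.Gamma (((2:ℝ) + 1) / 2) ^ 2 := by
  rw [show ((2:ℝ)+1)/2 = 1/2+1 by norm_num, show (2:ℝ)+1/2 = (1/2+1)+1 by norm_num,
    Real.Gamma_add_one (by norm_num : (1/2:ℝ)+1 ≠ 0),
    Real.Gamma_add_one (by norm_num : (1/2:ℝ) ≠ 0)]
  ring

theorem stmt0 :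
    (∀ p : ℝ, -1 / 2 < p →
      (1 + p ^ 2 / 2) * Real.Gamma ((p + 1) / 2) ^ 2 ≤
          Real.Gamma (1 / 2) * Real.Gamma (p + 1 / 2) ∧
      (Real.Gamma (1 / 2) * Real.Gamma (p + 1 / 2) =
          (1 + p ^ 2 / 2) * Real.Gamma ((p + 1) / 2) ^ 2 ↔ p = 0 ∨ p = 2)) ∧
    (∀ p : ℝ, -1 / 2 < p → p ≠ 0 →
      0 < Real.Gamma (1 / 2) * Real.Gamma (p + 1 / 2) - Real.Gamma ((p + 1) / 2) ^ 2) ∧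
    (∀ p : ℝ, -1 / 2 < p → p ≠ 0 → p ≠ 2 → aP p ∈ Set.Ioo (0 : ℝ) 1) ∧
    aP 2 = 1 := by
  have hG1 : 0 < Real.Gamma (1/2) := Real.Gamma_pos_of_pos (by norm_num)
  refine ⟨fun p hp => ⟨main_le' p (by linarith), ?_⟩, fun p hp h0 => ?_, fun p hp h0 h2 => ?_, ?_⟩
  · constructor
    · intro heq
      by_contra hne
      push_neg at hne
      have hlt := main_lt' p (by linarith) hne.1 hne.2
      linarith
    · rintro (rfl | rfl)
      · norm_num
        ring
      · exact eq_at_two'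
  · -- positivity of the difference
    have hle := main_le' p (by linarith)
    have hGp : 0 < Real.Gamma ((p + 1) / 2) := Real.Gamma_pos_of_pos (by linarith)
    have hp2 : 0 < p ^ 2 := lt_of_le_of_ne (sq_nonneg p) (Ne.symm (pow_ne_zero 2 h0))
    nlinarith [mul_pos hp2 (pow_pos hGp 2)]
  · -- aP p ∈ Ioo 0 1
    have hlt := main_lt' p (by linarith) h0 h2
    have hGp : 0 < Real.Gamma ((p + 1) / 2) := Real.Gamma_pos_of_pos (by linarith)
    have hp2 : 0 < p ^ 2 := lt_of_le_of_ne (sq_nonneg p) (Ne.symm (pow_ne_zero 2 h0))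
    set D : ℝ := Real.Gamma (1 / 2) * Real.Gamma (p + 1 / 2) - Real.Gamma ((p + 1) / 2) ^ 2
      with hD
    have hDgt : p ^ 2 * Real.Gamma ((p + 1) / 2) ^ 2 / 2 < D := by
      rw [hD]; nlinarith
    have hDpos : 0 < D := lt_trans (by positivity) hDgt
    rw [aP, if_neg h0]
    constructor
    · exact div_pos (mul_pos (abs_pos.mpr h0) hGp)
        (mul_pos (Real.sqrt_pos.mpr two_pos) (Real.sqrt_pos.mpr hDpos))
    · rw [div_lt_one (mul_pos (Real.sqrt_pos.mpr two_pos) (Real.sqrt_pos.mpr hDpos)),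
        ← Real.sqrt_mul (by norm_num : (0:ℝ) ≤ 2)]
      rw [Real.lt_sqrt (by positivity)]
      rw [mul_pow, sq_abs]
      linarith
  · -- aP 2 = 1
    rw [aP, if_neg (by norm_num : (2:ℝ) ≠ 0)]
    rw [show ((2:ℝ)+1)/2 = 1/2+1 by norm_num, show (2:ℝ)+1/2 = (1/2+1)+1 by norm_num,
      Real.Gamma_add_one (by norm_num : (1/2:ℝ)+1 ≠ 0),
      Real.Gamma_add_one (by norm_num : (1/2:ℝ) ≠ 0)]
    have hkey : Real.Gamma (1/2) * ((1/2+1) * (1/2 * Real.Gamma (1/2)))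
        - (1/2 * Real.Gamma (1/2)) ^ 2 = 2 * (Real.Gamma (1/2) / 2) ^ 2 := by ring
    rw [hkey, Real.sqrt_mul (by norm_num : (0:ℝ) ≤ 2),
      Real.sqrt_sq (by positivity : (0:ℝ) ≤ Real.Gamma (1/2) / 2)]
    have hs : Real.sqrt 2 * (Real.sqrt 2 * (Real.Gamma (1/2) / 2)) = Real.Gamma (1/2) := by
      rw [← mul_assoc, Real.mul_self_sqrt (by norm_num : (0:ℝ) ≤ 2)]; ring
    rw [hs, show |(2:ℝ)| = 2 by norm_num]
    field_simp
end

section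
/- One has a_p → 0 as p → -1/2 from the right, and a_p → 0 as p → ∞. -/
open Real Set Filter Topology

lemma gamma_tendsto_atTop_zero : Tendsto Real.Gamma (𝓝[>] (0:ℝ)) atTop := by
  have hcont : ContinuousAt Real.Gamma 1 := by
    refine (Real.differentiableAt_Gamma (fun m => ?_)).continuousAt
    intro h
    have : (0:ℝ) ≤ (m:ℝ) := Nat.cast_nonneg m
    linarith
  have h1 : Tendsto (fun y : ℝ => Real.Gamma (y + 1)) (𝓝[>] (0:ℝ)) (𝓝 1) := by
    have : Tendsto (fun y : ℝ => y + 1) (𝓝[>] (0:ℝ)) (𝓝 1) := by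
      have hct : ContinuousAt (fun y : ℝ => y + 1) 0 := by fun_prop
      simpa using hct.tendsto.mono_left nhdsWithin_le_nhds
    simpa [Real.Gamma_one, Function.comp_def] using (hcont.tendsto).comp this
  have h2 : Tendsto (fun y : ℝ => Real.Gamma (y + 1) * y⁻¹) (𝓝[>] (0:ℝ)) atTop :=
    h1.pos_mul_atTop one_pos tendsto_inv_nhdsGT_zero
  refine h2.congr' ?_
  filter_upwards [self_mem_nhdsWithin] with y hy
  rw [Real.Gamma_add_one (ne_of_gt hy), mul_comm y, mul_assoc,
    mul_inv_cancel₀ (ne_of_gt hy), mul_one]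

lemma gamma_mono : MonotoneOn Real.Gamma (Ici (2:ℝ)) :=
  Real.Gamma_strictMonoOn_Ici.monotoneOn

/-- Key inequality: for `p ≥ 4`,
`Γ((p+1)/2)² ≤ √π · 2^(−p) · p · Γ(p+1/2)`. -/
lemma key_ineq {p : ℝ} (hp : 4 ≤ p) :
    Real.Gamma ((p + 1) / 2) ^ 2 ≤
      Real.sqrt π * (2:ℝ) ^ (-p) * p * Real.Gamma (p + 1/2) := by
  have hp0 : (0:ℝ) < p := by linarith
  have hA : (0:ℝ) < Real.Gamma ((p + 1) / 2) := Real.Gamma_pos_of_pos (by linarith)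
  have hdup := Real.Gamma_mul_Gamma_add_half ((p + 1) / 2)
  have e1 : 2 * ((p + 1) / 2) = p + 1 := by ring
  rw [e1] at hdup
  have e2 : (1:ℝ) - (p + 1) = -p := by ring
  rw [e2] at hdup
  -- hdup : Γ((p+1)/2) * Γ((p+1)/2 + 1/2) = Γ(p+1) * 2^(−p) * √π
  have hmono1 : Real.Gamma ((p + 1) / 2) ≤ Real.Gamma ((p + 1) / 2 + 1 / 2) := by
    apply gamma_mono (by simp [mem_Ici]; linarith) (by simp [mem_Ici]; linarith)
    linarith
  have hmono2 : Real.Gamma p ≤ Real.Gamma (p + 1 / 2) := by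
    apply gamma_mono (by simp [mem_Ici]; linarith) (by simp [mem_Ici]; linarith)
    linarith
  have hadd : Real.Gamma (p + 1) = p * Real.Gamma p := Real.Gamma_add_one (ne_of_gt hp0)
  have hstep : Real.Gamma ((p + 1) / 2) ^ 2 ≤ Real.Gamma (p+1) * (2:ℝ) ^ (-p) * Real.sqrt π := by
    calc Real.Gamma ((p + 1) / 2) ^ 2
        ≤ Real.Gamma ((p + 1) / 2) * Real.Gamma ((p + 1) / 2 + 1 / 2) := by
          rw [sq]; exact mul_le_mul_of_nonneg_left hmono1 hA.le
      _ = Real.Gamma (p+1) * (2:ℝ) ^ (-p) * Real.sqrt π := hdup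
  have h2p : (0:ℝ) < (2:ℝ) ^ (-p) := Real.rpow_pos_of_pos two_pos _
  have hsπ : (0:ℝ) < Real.sqrt π := Real.sqrt_pos.mpr Real.pi_pos
  calc Real.Gamma ((p + 1) / 2) ^ 2
      ≤ Real.Gamma (p+1) * (2:ℝ) ^ (-p) * Real.sqrt π := hstep
    _ = p * Real.Gamma p * ((2:ℝ) ^ (-p) * Real.sqrt π) := by rw [hadd]; ring
    _ ≤ p * Real.Gamma (p + 1/2) * ((2:ℝ) ^ (-p) * Real.sqrt π) := by
        apply mul_le_mul_of_nonneg_right _ (by positivity)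
        exact mul_le_mul_of_nonneg_left hmono2 hp0.le
    _ = Real.sqrt π * (2:ℝ) ^ (-p) * p * Real.Gamma (p + 1/2) := by ring

/-- `a_p → 0` as `p → -1/2` from the right, and `a_p → 0` as `p → ∞`. -/
theorem stmt2 :
    Filter.Tendsto aP (nhdsWithin (-1 / 2 : ℝ) (Set.Ioi (-1 / 2 : ℝ))) (nhds 0) ∧
    Filter.Tendsto aP Filter.atTop (nhds 0) := by
  constructor
  · -- p → (-1/2)⁺
    set l := nhdsWithin (-1 / 2 : ℝ) (Set.Ioi (-1 / 2 : ℝ))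
    have hnum : Tendsto (fun p : ℝ => |p| * Real.Gamma ((p + 1) / 2)) l
        (𝓝 (|(-1/2 : ℝ)| * Real.Gamma ((-1/2 + 1) / 2))) := by
      have hc : ContinuousAt (fun p : ℝ => |p| * Real.Gamma ((p + 1) / 2)) (-1/2) := by
        apply ContinuousAt.mul
        · exact continuous_abs.continuousAt
        · have hG : ContinuousAt Real.Gamma (((-1/2 : ℝ) + 1) / 2) := by
            refine (Real.differentiableAt_Gamma (fun m => ?_)).continuousAt
            intro h
            have h0 : (0:ℝ) < ((-1/2 : ℝ) + 1) / 2 := by norm_num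
            rw [h] at h0
            have : (0:ℝ) ≤ (m:ℝ) := Nat.cast_nonneg m
            linarith
          have hlin : ContinuousAt (fun p : ℝ => (p + 1) / 2) (-1/2) := by fun_prop
          exact ContinuousAt.comp (g := Real.Gamma) (f := fun p : ℝ => (p + 1) / 2) hG hlin
      exact hc.tendsto.mono_left nhdsWithin_le_nhds
    have hshift : Tendsto (fun p : ℝ => p + 1/2) l (𝓝[>] (0:ℝ)) := by
      apply tendsto_nhdsWithin_of_tendsto_nhds_of_eventually_within
      · have hct : ContinuousAt (fun p : ℝ => p + 1/2) (-1/2) := by fun_prop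
        have h := hct.tendsto.mono_left (nhdsWithin_le_nhds : l ≤ 𝓝 (-1/2 : ℝ))
        have e : (-1/2 : ℝ) + 1/2 = 0 := by norm_num
        rw [e] at h
        exact h
      · filter_upwards [self_mem_nhdsWithin] with p hp
        simp only [mem_Ioi] at hp ⊢
        linarith
    have hGamma_top : Tendsto (fun p : ℝ => Real.Gamma (p + 1/2)) l atTop :=
      gamma_tendsto_atTop_zero.comp hshift
    have hinner : Tendsto (fun p : ℝ =>
        Real.Gamma (1/2) * Real.Gamma (p + 1/2) - Real.Gamma ((p + 1) / 2) ^ 2) l atTop := by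
      have h1 : Tendsto (fun p : ℝ => Real.Gamma (1/2) * Real.Gamma (p + 1/2)) l atTop := by
        apply Tendsto.const_mul_atTop _ hGamma_top
        rw [Real.Gamma_one_half_eq]
        positivity
      have h2 : Tendsto (fun p : ℝ => -Real.Gamma ((p + 1) / 2) ^ 2) l
          (𝓝 (-Real.Gamma ((-1/2 + 1) / 2) ^ 2)) := by
        have hc : ContinuousAt (fun p : ℝ => -Real.Gamma ((p + 1) / 2) ^ 2) (-1/2) := by
          apply ContinuousAt.neg
          apply ContinuousAt.pow
          have hG : ContinuousAt Real.Gamma (((-1/2 : ℝ) + 1) / 2) := by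
            refine (Real.differentiableAt_Gamma (fun m => ?_)).continuousAt
            intro h
            have h0 : (0:ℝ) < ((-1/2 : ℝ) + 1) / 2 := by norm_num
            rw [h] at h0
            have : (0:ℝ) ≤ (m:ℝ) := Nat.cast_nonneg m
            linarith
          have hlin : ContinuousAt (fun p : ℝ => (p + 1) / 2) (-1/2) := by fun_prop
          exact ContinuousAt.comp (g := Real.Gamma) (f := fun p : ℝ => (p + 1) / 2) hG hlin
        exact hc.tendsto.mono_left nhdsWithin_le_nhds
      have := h1.atTop_add h2
      simpa [sub_eq_add_neg] using this
    have hden : Tendsto (fun p : ℝ => Real.sqrt 2 * Real.sqrt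
        (Real.Gamma (1/2) * Real.Gamma (p + 1/2) - Real.Gamma ((p + 1) / 2) ^ 2)) l atTop := by
      apply Tendsto.const_mul_atTop (by positivity : (0:ℝ) < Real.sqrt 2)
      have hs : Tendsto Real.sqrt atTop atTop := by
        have := tendsto_rpow_atTop (by norm_num : (0:ℝ) < 1/2)
        refine this.congr' ?_
        filter_upwards [eventually_ge_atTop (0:ℝ)] with x hx
        rw [Real.sqrt_eq_rpow]
      exact hs.comp hinner
    have := hnum.div_atTop hden
    refine this.congr' ?_
    have hne : ∀ᶠ p in l, p ≠ 0 := by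
      have : Iio (0:ℝ) ∈ 𝓝 (-1/2 : ℝ) := Iio_mem_nhds (by norm_num)
      filter_upwards [nhdsWithin_le_nhds this] with p hp
      exact ne_of_lt hp
    filter_upwards [hne] with p hp
    simp [aP, hp]
  · -- p → ∞
    have hb : (0:ℝ) < Real.log 2 := Real.log_pos one_lt_two
    have hpow3 : Tendsto (fun p : ℝ => p ^ (3:ℕ) * (2:ℝ) ^ (-p)) atTop (𝓝 0) := by
      have := tendsto_rpow_mul_exp_neg_mul_atTop_nhds_zero 3 (Real.log 2) hb
      refine this.congr' ?_
      filter_upwards [eventually_gt_atTop (0:ℝ)] with p hp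
      rw [show (3:ℝ) = ((3:ℕ):ℝ) by norm_num, Real.rpow_natCast,
        Real.rpow_def_of_pos two_pos]
      ring_nf
    have hpow1 : Tendsto (fun p : ℝ => p * (2:ℝ) ^ (-p)) atTop (𝓝 0) := by
      have := tendsto_rpow_mul_exp_neg_mul_atTop_nhds_zero 1 (Real.log 2) hb
      refine this.congr' ?_
      filter_upwards [eventually_gt_atTop (0:ℝ)] with p hp
      rw [Real.rpow_one, Real.rpow_def_of_pos two_pos]
      ring_nf
    have hev : ∀ᶠ p in atTop, p * (2:ℝ) ^ (-p) ≤ 1/2 := by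
      have := hpow1.eventually (ge_mem_nhds (by norm_num : (0:ℝ) < 1/2))
      filter_upwards [this] with p hp using hp
    have hg : Tendsto (fun p : ℝ => Real.sqrt (p ^ (3:ℕ) * (2:ℝ) ^ (-p))) atTop (𝓝 0) := by
      have := (Real.continuous_sqrt.tendsto 0).comp hpow3
      simpa [Function.comp_def] using this
    apply squeeze_zero' ?_ ?_ hg
    · -- 0 ≤ aP p eventually
      filter_upwards [eventually_gt_atTop (0:ℝ)] with p hp
      rw [aP, if_neg (ne_of_gt hp)]
      positivity
    · -- aP p ≤ sqrt (p^3 * 2^(-p)) eventually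
      filter_upwards [eventually_ge_atTop (4:ℝ), hev] with p hp4 h2
      have hp0 : (0:ℝ) < p := by linarith
      set A := Real.Gamma ((p + 1) / 2) with hA_def
      set B := Real.Gamma (p + 1/2) with hB_def
      have hA : (0:ℝ) < A := Real.Gamma_pos_of_pos (by linarith)
      have hB : (0:ℝ) < B := Real.Gamma_pos_of_pos (by linarith)
      have hsπ : (0:ℝ) < Real.sqrt π := Real.sqrt_pos.mpr Real.pi_pos
      have h2p : (0:ℝ) < (2:ℝ) ^ (-p) := Real.rpow_pos_of_pos two_pos _
      have hkey : A ^ 2 ≤ Real.sqrt π * (2:ℝ) ^ (-p) * p * B := key_ineq hp4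
      set D := Real.Gamma (1/2) * B - A ^ 2 with hD_def
      have hGhalf : Real.Gamma (1/2 : ℝ) = Real.sqrt π := Real.Gamma_one_half_eq
      have hA2 : A ^ 2 ≤ Real.sqrt π * B / 2 := by
        have h' : (2:ℝ) ^ (-p) * p ≤ 1/2 := by
          rw [mul_comm]; exact h2
        have this1 : Real.sqrt π * (2:ℝ) ^ (-p) * p * B ≤ Real.sqrt π * B / 2 := by
          nlinarith [mul_le_mul_of_nonneg_right h'
            (by positivity : (0:ℝ) ≤ Real.sqrt π * B)]
        linarith [hkey]
      have hD_lb : Real.sqrt π * B / 2 ≤ D := by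
        rw [hD_def, hGhalf]; linarith
      have hD_pos : (0:ℝ) < D := lt_of_lt_of_le (by positivity) hD_lb
      have haP : aP p = p * A / (Real.sqrt 2 * Real.sqrt D) := by
        rw [aP, if_neg (ne_of_gt hp0), abs_of_pos hp0]
      have haP_nonneg : 0 ≤ aP p := by
        rw [haP]; positivity
      -- square comparison
      have h4 : Real.sqrt π * B ≤ 2 * D := by rw [hD_def, hGhalf]; linarith
      have hsq : (aP p) ^ 2 ≤ p ^ (3:ℕ) * (2:ℝ) ^ (-p) := by
        rw [haP, div_pow, mul_pow, mul_pow, Real.sq_sqrt (by norm_num : (0:ℝ) ≤ 2),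
          Real.sq_sqrt hD_pos.le, div_le_iff₀ (by positivity)]
        calc p ^ 2 * A ^ 2
            ≤ p ^ 2 * (Real.sqrt π * (2:ℝ) ^ (-p) * p * B) :=
              mul_le_mul_of_nonneg_left hkey (by positivity)
          _ = p ^ (3:ℕ) * (2:ℝ) ^ (-p) * (Real.sqrt π * B) := by ring
          _ ≤ p ^ (3:ℕ) * (2:ℝ) ^ (-p) * (2 * D) :=
              mul_le_mul_of_nonneg_left h4 (by positivity)
      calc aP p = Real.sqrt ((aP p) ^ 2) := (Real.sqrt_sq haP_nonneg).symm
        _ ≤ Real.sqrt (p ^ (3:ℕ) * (2:ℝ) ^ (-p)) := Real.sqrt_le_sqrt hsq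
end

section
/- For each p ∈ (0,∞), the function s ↦ λ_p(s) is even, continuous on ℝ, and strictly increasing on [0,∞); for each p ∈ (-1,0), the function s ↦ λ_p(s) is even, continuous on ℝ, and strictly decreasing on [0,∞). -/
open MeasureTheory ProbabilityTheory Real Set
open scoped ENNReal NNReal

/-- The standard Gaussian measure `N(0,1)` on `ℝ`. -/
noncomputable def γ : Measure ℝ := gaussianReal 0 1

/-- `λ_p(s) = E|Z+s|^p` for a standard normal `Z`. -/
noncomputable def lam (p s : ℝ) : ℝ := ∫ z, |z + s| ^ p ∂γ

noncomputable def pdf1 (y : ℝ) : ℝ := (Real.sqrt (2 * π))⁻¹ * Real.exp (-y ^ 2 / 2)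

lemma pdf1_pos (y : ℝ) : 0 < pdf1 y := by
  have : 0 < Real.sqrt (2 * π) := Real.sqrt_pos.2 (by positivity)
  exact mul_pos (inv_pos.2 this) (Real.exp_pos _)

lemma pdf1_even (y : ℝ) : pdf1 (-y) = pdf1 y := by simp [pdf1]

lemma gaussianPDFReal_eq (x : ℝ) : gaussianPDFReal 0 1 x = pdf1 x := by
  simp [gaussianPDFReal, pdf1]

lemma measurable_pdf1 : Measurable pdf1 := by
  unfold pdf1; fun_prop

lemma integral_gamma (f : ℝ → ℝ) (hf : Measurable f) :
    ∫ z, f z ∂γ = ∫ z, f z * pdf1 z := by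
  rw [γ, gaussianReal_of_var_ne_zero 0 one_ne_zero]
  have hm : Measurable fun x => (gaussianPDFReal 0 1 x).toNNReal :=
    (measurable_gaussianPDFReal 0 1).real_toNNReal
  have : (gaussianPDF 0 1) = fun x => ((gaussianPDFReal 0 1 x).toNNReal : ℝ≥0∞) := rfl
  rw [this, integral_withDensity_eq_integral_smul hm]
  congr 1
  ext x
  rw [NNReal.smul_def, smul_eq_mul, Real.coe_toNNReal _ (gaussianPDFReal_nonneg 0 1 x),
    gaussianPDFReal_eq, mul_comm]

lemma measurable_F (p t : ℝ) : Measurable fun x : ℝ => |x| ^ p * pdf1 (x - t) := by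
  unfold pdf1; fun_prop

lemma lam_eq (p s : ℝ) : lam p s = ∫ x, |x| ^ p * pdf1 (x - s) := by
  rw [lam, integral_gamma _ (by fun_prop)]
  have := integral_add_right_eq_self (μ := (volume : Measure ℝ))
    (fun x : ℝ => |x| ^ p * pdf1 (x - s)) s
  rw [← this]
  congr 1
  ext z
  simp [mul_comm]

lemma integrable_abs_rpow_mul_exp_neg_mul_sq {b : ℝ} (hb : 0 < b) {s : ℝ} (hs : -1 < s) :
    Integrable fun x : ℝ => |x| ^ s * Real.exp (-b * x ^ 2) := by
  have h := integrableOn_rpow_mul_exp_neg_mul_sq hb hs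
  have h' : IntegrableOn (fun x : ℝ => |x| ^ s * Real.exp (-b * x ^ 2)) (Ioi 0) :=
    h.congr_fun (fun x hx => by rw [abs_of_pos hx]) measurableSet_Ioi
  rw [← integrableOn_univ, ← Iio_union_Ici (a := (0:ℝ)), integrableOn_union,
    integrableOn_Ici_iff_integrableOn_Ioi]
  refine ⟨?_, h'⟩
  rw [← (Measure.measurePreserving_neg (volume : Measure ℝ)).integrableOn_comp_preimage
      (Homeomorph.neg ℝ).measurableEmbedding]
  simp only [Function.comp_def, neg_sq, abs_neg, neg_preimage, neg_Iio, neg_neg, neg_zero]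
  exact h'

lemma integrable_master {p : ℝ} (hp : -1 < p) (a : ℝ) {b : ℝ} (hb : 0 < b) :
    Integrable fun x : ℝ => |x| ^ p * Real.exp (-(b * (x - a) ^ 2)) := by
  have h := ((integrable_abs_rpow_mul_exp_neg_mul_sq (half_pos hb) hp).const_mul
    (Real.exp (2 * a ^ 2 * b)))
  refine h.mono' (Measurable.aestronglyMeasurable (by fun_prop))
    (Filter.Eventually.of_forall fun x => ?_)
  have h1 : Real.exp (-(b * (x - a) ^ 2)) ≤ Real.exp (2 * a ^ 2 * b) * Real.exp (-(b/2) * x ^ 2) := by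
    rw [← Real.exp_add, Real.exp_le_exp]
    nlinarith [sq_nonneg (x - 2 * a), hb.le]
  have h0 : (0:ℝ) ≤ |x| ^ p := Real.rpow_nonneg (abs_nonneg x) p
  rw [Real.norm_eq_abs, abs_mul, abs_of_nonneg h0, abs_of_nonneg (Real.exp_pos _).le]
  calc |x| ^ p * Real.exp (-(b * (x - a) ^ 2))
      ≤ |x| ^ p * (Real.exp (2 * a ^ 2 * b) * Real.exp (-(b/2) * x ^ 2)) :=
        mul_le_mul_of_nonneg_left h1 h0
    _ = Real.exp (2 * a ^ 2 * b) * (|x| ^ p * Real.exp (-(b/2) * x ^ 2)) := by ring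

lemma hasDerivAt_pdf1 (y : ℝ) : HasDerivAt pdf1 (-y * pdf1 y) y := by
  have h1 : HasDerivAt (fun y : ℝ => -y ^ 2 / 2) (-y) y := by
    have := ((hasDerivAt_pow 2 y).neg).div_const 2
    simpa using this.congr_deriv (by ring)
  have h2 := (h1.exp).const_mul ((Real.sqrt (2 * π))⁻¹)
  have he : -y * pdf1 y = (Real.sqrt (2 * π))⁻¹ * (Real.exp (-y ^ 2 / 2) * -y) := by
    rw [pdf1]; ring
  rw [he]; exact h2

lemma abs_mul_pdf1_le (y : ℝ) :
    |y| * pdf1 y ≤ (Real.sqrt (2 * π))⁻¹ * Real.exp (-y ^ 2 / 4) := by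
  have h1 : |y| ≤ Real.exp (y ^ 2 / 4) := by
    have := Real.add_one_le_exp (y ^ 2 / 4)
    nlinarith [sq_nonneg (|y| / 2 - 1), sq_abs y]
  have h2 : |y| * pdf1 y ≤ Real.exp (y ^ 2 / 4) * pdf1 y :=
    mul_le_mul_of_nonneg_right h1 (pdf1_pos y).le
  refine h2.trans (le_of_eq ?_)
  rw [pdf1, ← mul_assoc, mul_comm (Real.exp (y^2/4)), mul_assoc, ← Real.exp_add]
  ring_nf

lemma integrable_F {p : ℝ} (hp : -1 < p) (t : ℝ) :
    Integrable fun x : ℝ => |x| ^ p * pdf1 (x - t) := by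
  have h := (integrable_master hp t (b := (1:ℝ)/2) (by norm_num)).const_mul
    ((Real.sqrt (2 * π))⁻¹)
  refine h.congr (Filter.Eventually.of_forall fun x => ?_)
  simp only [pdf1]
  ring_nf

lemma hasDerivAt_lam {p : ℝ} (hp : -1 < p) (s : ℝ) :
    HasDerivAt (lam p) (∫ u, |u + s| ^ p * (u * pdf1 u)) s := by
  set F : ℝ → ℝ → ℝ := fun t x => |x| ^ p * pdf1 (x - t) with hF
  set F' : ℝ → ℝ → ℝ := fun t x => |x| ^ p * ((x - t) * pdf1 (x - t)) with hF'
  set bound : ℝ → ℝ := fun x =>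
    (Real.sqrt (2 * π))⁻¹ * Real.exp ((1:ℝ)/4) * (|x| ^ p * Real.exp (-((1:ℝ)/8 * (x - s) ^ 2)))
  have key := hasDerivAt_integral_of_dominated_loc_of_deriv_le (μ := (volume : Measure ℝ))
    (F := F) (F' := F') (x₀ := s) (bound := bound) (s := Metric.ball s 1) (Metric.ball_mem_nhds s one_pos)
    (Filter.Eventually.of_forall fun t => (measurable_F p t).aestronglyMeasurable)
    (integrable_F hp s)
    (Measurable.aestronglyMeasurable (by unfold F'; unfold pdf1; fun_prop))
    (Filter.Eventually.of_forall fun x => fun t ht => ?_)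
    (((integrable_master hp s (b := (1:ℝ)/8) (by norm_num)).const_mul _))
    (Filter.Eventually.of_forall fun x => fun t ht => ?_)
  · -- conclude
    obtain ⟨-, hd⟩ := key
    have hl : lam p = fun t => ∫ x, F t x := by
      ext t; exact lam_eq p t
    rw [hl]
    refine hd.congr_deriv ?_
    have := integral_add_right_eq_self (μ := (volume : Measure ℝ)) (F' s) s
    rw [← this]
    congr 1
    ext u
    simp only [hF']
    rw [add_sub_cancel_right]
  · -- bound
    have hb : dist t s < 1 := by simpa [Metric.mem_ball] using ht
    have h1 : |x - t| * pdf1 (x - t) ≤ (Real.sqrt (2 * π))⁻¹ * Real.exp (-(x - t) ^ 2 / 4) :=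
      abs_mul_pdf1_le (x - t)
    have h2 : Real.exp (-(x - t) ^ 2 / 4) ≤ Real.exp ((1:ℝ)/4) * Real.exp (-((1:ℝ)/8 * (x - s) ^ 2)) := by
      rw [← Real.exp_add, Real.exp_le_exp]
      have : (t - s) ^ 2 < 1 := by
        rw [Real.dist_eq] at hb
        nlinarith [abs_nonneg (t - s), sq_abs (t - s), hb]
      nlinarith [sq_nonneg ((x - t) - (t - s))]
    have h0 : (0:ℝ) ≤ |x| ^ p := Real.rpow_nonneg (abs_nonneg x) p
    have hsq : (0:ℝ) < Real.sqrt (2 * π) := Real.sqrt_pos.2 (by positivity)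
    calc ‖F' t x‖ = |x| ^ p * (|x - t| * pdf1 (x - t)) := by
          rw [hF', Real.norm_eq_abs, abs_mul, abs_of_nonneg h0, abs_mul,
            abs_of_nonneg (pdf1_pos _).le]
      _ ≤ |x| ^ p * ((Real.sqrt (2 * π))⁻¹ * Real.exp (-(x - t) ^ 2 / 4)) :=
          mul_le_mul_of_nonneg_left h1 h0
      _ ≤ |x| ^ p * ((Real.sqrt (2 * π))⁻¹ *
            (Real.exp ((1:ℝ)/4) * Real.exp (-((1:ℝ)/8 * (x - s) ^ 2)))) := by
          have := mul_le_mul_of_nonneg_left h2 (inv_pos.2 hsq).le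
          exact mul_le_mul_of_nonneg_left this h0
      _ = bound x := by unfold bound; ring
  · -- differentiability
    have h1 : HasDerivAt (fun t : ℝ => x - t) (-1) t := (hasDerivAt_id t).const_sub x
    have h2 := (hasDerivAt_pdf1 (x - t)).comp t h1
    have h3 := h2.const_mul (|x| ^ p)
    have he : F' t x = |x| ^ p * (-(x - t) * pdf1 (x - t) * -1) := by
      simp only [hF']; ring
    rw [he]
    exact h3

lemma integrable_h {p : ℝ} (hp : -1 < p) (s : ℝ) :
    Integrable fun u : ℝ => |u + s| ^ p * (u * pdf1 u) := by
  have hx : Integrable fun x : ℝ => |x| ^ p * ((x - s) * pdf1 (x - s)) := by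
    have h := (integrable_master hp s (b := (1:ℝ)/4) (by norm_num)).const_mul
      ((Real.sqrt (2 * π))⁻¹)
    refine h.mono' (Measurable.aestronglyMeasurable (by unfold pdf1; fun_prop))
      (Filter.Eventually.of_forall fun x => ?_)
    have h0 : (0:ℝ) ≤ |x| ^ p := Real.rpow_nonneg (abs_nonneg x) p
    have h1 := abs_mul_pdf1_le (x - s)
    calc ‖|x| ^ p * ((x - s) * pdf1 (x - s))‖
        = |x| ^ p * (|x - s| * pdf1 (x - s)) := by
          rw [Real.norm_eq_abs, abs_mul, abs_of_nonneg h0, abs_mul,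
            abs_of_nonneg (pdf1_pos _).le]
      _ ≤ |x| ^ p * ((Real.sqrt (2 * π))⁻¹ * Real.exp (-(x - s) ^ 2 / 4)) :=
          mul_le_mul_of_nonneg_left h1 h0
      _ = (Real.sqrt (2 * π))⁻¹ * (|x| ^ p * Real.exp (-((1:ℝ)/4 * (x - s) ^ 2))) := by
          ring_nf
  have := hx.comp_add_right s
  refine this.congr (Filter.Eventually.of_forall fun u => ?_)
  simp [add_sub_cancel_right]

lemma D_pos {p : ℝ} (hp : 0 < p) {s : ℝ} (hs : 0 < s) :
    0 < ∫ u, |u + s| ^ p * (u * pdf1 u) := by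
  set h : ℝ → ℝ := fun u => |u + s| ^ p * (u * pdf1 u) with hh
  have hint : Integrable h := integrable_h (by linarith) s
  have hneg : Integrable fun u => h (-u) := hint.comp_neg
  have split : ∫ u, h u = (∫ u in Iic (0:ℝ), h u) + ∫ u in Ioi (0:ℝ), h u := by
    rw [← setIntegral_union (Iic_disjoint_Ioi le_rfl) measurableSet_Ioi
      hint.integrableOn hint.integrableOn, Iic_union_Ioi, setIntegral_univ]
  have refl : ∫ u in Iic (0:ℝ), h u = ∫ u in Ioi (0:ℝ), h (-u) := by
    rw [integral_comp_neg_Ioi]; norm_num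
  have comb : ∫ u, h u = ∫ u in Ioi (0:ℝ), (h u + h (-u)) := by
    rw [split, refl, add_comm, ← integral_add hint.integrableOn hneg.integrableOn]
  rw [comb]
  have key : ∀ u : ℝ, h u + h (-u) = u * pdf1 u * (|u + s| ^ p - |u - s| ^ p) := by
    intro u
    have : |-u + s| = |u - s| := by rw [← abs_neg]; ring_nf
    simp only [hh, pdf1_even, this]
    ring
  have habs : ∀ u : ℝ, 0 < u → |u - s| < u + s :=
    fun u hu => abs_lt.2 ⟨by linarith, by linarith⟩
  have hpos : ∀ u ∈ Ioi (0:ℝ), 0 < h u + h (-u) := by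
    intro u hu
    have hu0 : (0:ℝ) < u := hu
    rw [key u]
    have hlt : |u - s| ^ p < |u + s| ^ p := by
      rw [abs_of_pos (by linarith : 0 < u + s)]
      exact Real.rpow_lt_rpow (abs_nonneg _) (habs u hu0) hp
    exact mul_pos (mul_pos hu0 (pdf1_pos u)) (by linarith)
  have hint2 : IntegrableOn (fun u => h u + h (-u)) (Ioi 0) :=
    (hint.add hneg).integrableOn
  rw [setIntegral_pos_iff_support_of_nonneg_ae
    ((ae_restrict_iff' measurableSet_Ioi).2
      (Filter.Eventually.of_forall fun u hu => (hpos u hu).le)) hint2]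
  have hsub : Ioi (0:ℝ) ⊆ Function.support (fun u => h u + h (-u)) ∩ Ioi 0 :=
    fun u hu => ⟨(hpos u hu).ne', hu⟩
  calc (0:ℝ≥0∞) < ⊤ := by norm_num
    _ = volume (Ioi (0:ℝ)) := by simp
    _ ≤ _ := measure_mono hsub

lemma D_neg {p : ℝ} (hp1 : -1 < p) (hp : p < 0) {s : ℝ} (hs : 0 < s) :
    (∫ u, |u + s| ^ p * (u * pdf1 u)) < 0 := by
  set h : ℝ → ℝ := fun u => |u + s| ^ p * (u * pdf1 u) with hh
  have hint : Integrable h := integrable_h hp1 s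
  have hneg : Integrable fun u => h (-u) := hint.comp_neg
  have split : ∫ u, h u = (∫ u in Iic (0:ℝ), h u) + ∫ u in Ioi (0:ℝ), h u := by
    rw [← setIntegral_union (Iic_disjoint_Ioi le_rfl) measurableSet_Ioi
      hint.integrableOn hint.integrableOn, Iic_union_Ioi, setIntegral_univ]
  have refl : ∫ u in Iic (0:ℝ), h u = ∫ u in Ioi (0:ℝ), h (-u) := by
    rw [integral_comp_neg_Ioi]; norm_num
  have comb : ∫ u, h u = ∫ u in Ioi (0:ℝ), (h u + h (-u)) := by
    rw [split, refl, add_comm, ← integral_add hint.integrableOn hneg.integrableOn]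
  rw [comb]
  have key : ∀ u : ℝ, h u + h (-u) = u * pdf1 u * (|u + s| ^ p - |u - s| ^ p) := by
    intro u
    have : |-u + s| = |u - s| := by rw [← abs_neg]; ring_nf
    simp only [hh, pdf1_even, this]
    ring
  have habs : ∀ u : ℝ, 0 < u → |u - s| < u + s :=
    fun u hu => abs_lt.2 ⟨by linarith, by linarith⟩
  have hneg' : ∀ u ∈ Ioi (0:ℝ) \ {s}, 0 < -(h u + h (-u)) := by
    rintro u ⟨hu1, hu2⟩
    have hu0 : (0:ℝ) < u := hu1
    have hne : u ≠ s := hu2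
    rw [key u]
    have h0 : (0:ℝ) < |u - s| := abs_pos.2 (sub_ne_zero.2 hne)
    have hlt : |u + s| ^ p < |u - s| ^ p := by
      rw [abs_of_pos (by linarith : 0 < u + s)]
      exact Real.rpow_lt_rpow_of_neg h0 (habs u hu0) hp
    nlinarith [mul_pos hu0 (pdf1_pos u)]
  have hint2 : IntegrableOn (fun u => -(h u + h (-u))) (Ioi 0) :=
    ((hint.add hneg).neg).integrableOn
  have hae : ∀ᵐ u ∂(volume.restrict (Ioi (0:ℝ))), u ≠ s := by
    refine ae_restrict_of_ae ?_
    refine ae_iff.2 ?_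
    have he : {u : ℝ | ¬ u ≠ s} = {s} := by ext u; simp
    rw [he]; exact measure_singleton s
  have hnonneg : (0:ℝ → ℝ) ≤ᵐ[volume.restrict (Ioi (0:ℝ))] fun u => -(h u + h (-u)) := by
    filter_upwards [hae, ae_restrict_mem measurableSet_Ioi] with u hu1 hu2
    exact (hneg' u ⟨hu2, hu1⟩).le
  have hposint : 0 < ∫ u in Ioi (0:ℝ), -(h u + h (-u)) := by
    rw [setIntegral_pos_iff_support_of_nonneg_ae hnonneg hint2]
    have hsub : Ioi (0:ℝ) \ {s} ⊆ Function.support (fun u => -(h u + h (-u))) ∩ Ioi 0 :=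
      fun u hu => ⟨(hneg' u hu).ne', hu.1⟩
    calc (0:ℝ≥0∞) < ⊤ := by norm_num
      _ = volume (Ioi (0:ℝ) \ {s}) := by
          rw [measure_diff_null (measure_singleton s)]; simp
      _ ≤ _ := measure_mono hsub
  have := hposint
  rw [integral_neg] at this
  linarith

lemma lam_even (p s : ℝ) : lam p (-s) = lam p s := by
  rw [lam_eq, lam_eq]
  rw [← integral_neg_eq_self (fun x : ℝ => |x| ^ p * pdf1 (x - s)) volume]
  congr 1
  ext x
  rw [sub_neg_eq_add, abs_neg]
  congr 1
  rw [← pdf1_even]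
  ring_nf

theorem stmt4 :
    (∀ p : ℝ, 0 < p →
      (∀ s : ℝ, lam p (-s) = lam p s) ∧ Continuous (lam p) ∧
        StrictMonoOn (lam p) (Set.Ici 0)) ∧
    (∀ p : ℝ, p ∈ Set.Ioo (-1 : ℝ) 0 →
      (∀ s : ℝ, lam p (-s) = lam p s) ∧ Continuous (lam p) ∧
        StrictAntiOn (lam p) (Set.Ici 0)) := by
  constructor
  · intro p hp
    have hp1 : (-1:ℝ) < p := by linarith
    have hc : Continuous (lam p) :=
      continuous_iff_continuousAt.2 fun s => (hasDerivAt_lam hp1 s).continuousAt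
    refine ⟨fun s => lam_even p s, hc, ?_⟩
    apply strictMonoOn_of_deriv_pos (convex_Ici 0) hc.continuousOn
    intro x hx
    rw [interior_Ici] at hx
    rw [(hasDerivAt_lam hp1 x).deriv]
    exact D_pos hp hx
  · rintro p ⟨hp1, hp0⟩
    have hc : Continuous (lam p) :=
      continuous_iff_continuousAt.2 fun s => (hasDerivAt_lam hp1 s).continuousAt
    refine ⟨fun s => lam_even p s, hc, ?_⟩
    apply strictAntiOn_of_deriv_neg (convex_Ici 0) hc.continuousOn
    intro x hx
    rw [interior_Ici] at hx
    rw [(hasDerivAt_lam hp1 x).deriv]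
    exact D_neg hp1 hp0 hx
end

section
/- For each p ∈ [2,∞) and every real s one has λ_p(s) − λ_p(0) ≥ (p/2)·λ_p(0)·s², and this inequality is strict whenever p > 2 and s ≠ 0. -/
open MeasureTheory ProbabilityTheory Real Set
open scoped ENNReal NNReal

namespace Stmt8Aux

/-! ### The standard Gaussian density -/

noncomputable def φR : ℝ → ℝ := gaussianPDFReal 0 1

lemma φR_eq (x : ℝ) : φR x = (Real.sqrt (2 * π))⁻¹ * rexp (-(1/2) * x ^ 2) := by
  simp only [φR, gaussianPDFReal, NNReal.coe_one, mul_one, sub_zero]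
  congr 1
  rw [Real.exp_eq_exp]
  ring

lemma φR_nonneg (x : ℝ) : 0 ≤ φR x := gaussianPDFReal_nonneg 0 1 x

lemma φR_abs (x : ℝ) : φR |x| = φR x := by
  rw [φR_eq, φR_eq, sq_abs]

lemma φR_neg (x : ℝ) : φR (-x) = φR x := by
  rw [φR_eq, φR_eq, neg_sq]

lemma measurable_φR : Measurable φR := measurable_gaussianPDFReal 0 1

lemma continuous_φR : Continuous φR := by
  have : φR = fun x => (Real.sqrt (2 * π))⁻¹ * rexp (-(1/2) * x ^ 2) := funext φR_eq
  rw [this]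
  exact continuous_const.mul (Real.continuous_exp.comp (continuous_const.mul (continuous_pow 2)))

lemma integral_gaussianReal (m : ℝ) (f : ℝ → ℝ) :
    ∫ x, f x ∂(gaussianReal m 1) = ∫ x, gaussianPDFReal m 1 x * f x := by
  rw [gaussianReal_of_var_ne_zero m one_ne_zero,
    show gaussianPDF m 1 = (fun x => ((Real.toNNReal (gaussianPDFReal m 1 x) : ℝ≥0) : ℝ≥0∞))
      from rfl,
    integral_withDensity_eq_integral_smul ((measurable_gaussianPDFReal m 1).real_toNNReal) f]
  congr 1
  funext x
  rw [NNReal.smul_def, Real.coe_toNNReal _ (gaussianPDFReal_nonneg _ _ _), smul_eq_mul]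

lemma integral_γ (f : ℝ → ℝ) : ∫ x, f x ∂γ = ∫ x, f x * φR x := by
  rw [γ, integral_gaussianReal 0 f]
  simp_rw [mul_comm, φR]

lemma γ_eq : γ = volume.withDensity fun x => ENNReal.ofReal (φR x) := by
  rw [γ, gaussianReal_of_var_ne_zero 0 one_ne_zero]; rfl

lemma integrable_γ_iff {f : ℝ → ℝ} :
    Integrable f γ ↔ Integrable (fun x => f x * φR x) volume := by
  rw [γ_eq]
  refine Iff.trans (integrable_withDensity_iff (measurable_φR.ennreal_ofReal)
    (ae_of_all _ fun x => ENNReal.ofReal_lt_top))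
    (integrable_congr (ae_of_all _ fun x => ?_))
  simp only [ENNReal.toReal_ofReal (φR_nonneg x)]

/-! ### Integrability facts -/

lemma continuous_abs_rpow {q : ℝ} (hq : 0 ≤ q) : Continuous fun x : ℝ => |x| ^ q := by
  rw [continuous_iff_continuousAt]
  intro x
  exact (Real.continuousAt_rpow_const _ _ (Or.inr hq)).comp continuous_abs.continuousAt

lemma abs_rpow_le_exp {q : ℝ} (hq : 0 ≤ q) (x : ℝ) : |x| ^ q ≤ rexp (q * |x|) := by
  rcases eq_or_ne x 0 with rfl | hx
  · simp only [abs_zero, mul_zero, Real.exp_zero]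
    exact Real.zero_rpow_le_one q
  · have h1 : 0 < |x| := abs_pos.mpr hx
    rw [← Real.exp_log (Real.rpow_pos_of_pos h1 q), Real.log_rpow h1]
    apply Real.exp_le_exp.mpr
    have h2 := Real.log_le_sub_one_of_pos h1
    nlinarith [abs_nonneg x]

lemma integrable_exp_shift (a : ℝ) :
    Integrable (fun x => rexp (a * x - (1/2) * x ^ 2)) volume := by
  have h : (fun x : ℝ => rexp (a * x - (1/2) * x ^ 2))
      = fun x => rexp (a ^ 2 / 2) * rexp (-(1/2) * (x - a) ^ 2) := by
    funext x; rw [← Real.exp_add]; congr 1; ring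
  rw [h]
  exact (((integrable_exp_neg_mul_sq (by norm_num : (0:ℝ) < 1/2)).comp_sub_right a).const_mul _)

lemma integrable_kernel {q : ℝ} (hq : 0 ≤ q) (t : ℝ) :
    Integrable (fun x => |x| ^ q * rexp (t * x) * φR x) volume := by
  have hc : (0:ℝ) ≤ (Real.sqrt (2 * π))⁻¹ := by positivity
  set a := q + |t| with ha
  have hInt : Integrable (fun x => (Real.sqrt (2 * π))⁻¹ *
      (rexp (a * x - (1/2) * x ^ 2) + rexp (-a * x - (1/2) * x ^ 2))) volume := by
    exact (((integrable_exp_shift a).add (integrable_exp_shift (-a))).const_mul _)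
  refine hInt.mono' ?_ (ae_of_all _ fun x => ?_)
  · exact (((continuous_abs_rpow hq).mul
      (Real.continuous_exp.comp (continuous_const.mul continuous_id))).mul
      continuous_φR).aestronglyMeasurable
  · have hq1 : (0:ℝ) ≤ |x| ^ q := Real.rpow_nonneg (abs_nonneg x) q
    rw [Real.norm_eq_abs, abs_of_nonneg (mul_nonneg (mul_nonneg hq1 (Real.exp_pos _).le)
      (φR_nonneg x)), φR_eq]
    have h1 : |x| ^ q ≤ rexp (q * |x|) := abs_rpow_le_exp hq x
    have h2 : t * x ≤ |t| * |x| := by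
      calc t * x ≤ |t * x| := le_abs_self _
      _ = |t| * |x| := abs_mul t x
    have e1 : |x| ^ q * rexp (t * x) ≤ rexp (a * |x|) := by
      have := mul_le_mul h1 (Real.exp_le_exp.mpr h2) (Real.exp_pos _).le (Real.exp_pos _).le
      rw [← Real.exp_add] at this
      rw [show a * |x| = q * |x| + |t| * |x| by rw [ha]; ring]; exact this
    have h4 : rexp (a * |x| - (1/2) * x ^ 2)
        ≤ rexp (a * x - (1/2) * x ^ 2) + rexp (-a * x - (1/2) * x ^ 2) := by
      rcases abs_cases x with ⟨h, _⟩ | ⟨h, _⟩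
      · rw [h]; linarith [(Real.exp_pos (-a * x - (1/2) * x ^ 2)).le]
      · rw [h]
        have e : a * -x = -a * x := by ring
        rw [e]; linarith [(Real.exp_pos (a * x - (1/2) * x ^ 2)).le]
    have hmain : |x| ^ q * rexp (t * x) * rexp (-(1/2) * x ^ 2)
        ≤ rexp (a * x - (1/2) * x ^ 2) + rexp (-a * x - (1/2) * x ^ 2) := by
      calc |x| ^ q * rexp (t * x) * rexp (-(1/2) * x ^ 2)
          ≤ rexp (a * |x|) * rexp (-(1/2) * x ^ 2) :=
            mul_le_mul_of_nonneg_right e1 (Real.exp_pos _).le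
        _ = rexp (a * |x| - (1/2) * x ^ 2) := by rw [← Real.exp_add]; congr 1; ring
        _ ≤ _ := h4
    calc |x| ^ q * rexp (t * x) * ((Real.sqrt (2 * π))⁻¹ * rexp (-(1/2) * x ^ 2))
        = (Real.sqrt (2 * π))⁻¹ * (|x| ^ q * rexp (t * x) * rexp (-(1/2) * x ^ 2)) := by ring
      _ ≤ _ := mul_le_mul_of_nonneg_left hmain hc

lemma integrable_abs_rpow_exp {q : ℝ} (hq : 0 ≤ q) (t : ℝ) :
    Integrable (fun x => |x| ^ q * rexp (t * x)) γ := by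
  rw [integrable_γ_iff]; exact integrable_kernel hq t

lemma integrable_abs_rpow {q : ℝ} (hq : 0 ≤ q) : Integrable (fun x => |x| ^ q) γ := by
  have h := integrable_abs_rpow_exp hq 0
  simpa using h

/-! ### Moments -/

noncomputable def M (q : ℝ) : ℝ := ∫ x, |x| ^ q ∂γ

lemma M_nonneg (q : ℝ) : 0 ≤ M q :=
  integral_nonneg fun x => Real.rpow_nonneg (abs_nonneg x) q

instance : IsProbabilityMeasure γ := by unfold γ; infer_instance

lemma M_pos {q : ℝ} (hq : 0 < q) : 0 < M q := by
  rw [M, integral_pos_iff_support_of_nonneg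
    (fun x => Real.rpow_nonneg (abs_nonneg x) q) (integrable_abs_rpow hq.le)]
  have h1 : (0:ℝ≥0∞) < γ {(0:ℝ)}ᶜ := by
    rw [measure_compl (measurableSet_singleton 0) (measure_ne_top _ _)]
    have h0 : γ {(0:ℝ)} = 0 :=
      gaussianReal_absolutelyContinuous 0 one_ne_zero (by simp)
    simp [h0]
  refine lt_of_lt_of_le h1 (measure_mono fun x hx => ?_)
  simp only [mem_compl_iff, mem_singleton_iff] at hx
  simp only [Function.mem_support]
  exact (Real.rpow_pos_of_pos (abs_pos.mpr hx) q).ne'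

lemma M_eq (q : ℝ) :
    M q = 2 * ((Real.sqrt (2 * π))⁻¹ * ∫ x in Ioi (0:ℝ), x ^ q * rexp (-(1/2) * x ^ 2)) := by
  have hcomp : (∫ x : ℝ, |x| ^ q * φR |x|) = 2 * ∫ x in Ioi (0:ℝ), x ^ q * φR x :=
    integral_comp_abs (f := fun y => y ^ q * φR y)
  have h2 : (∫ x : ℝ, |x| ^ q * φR x) = ∫ x : ℝ, |x| ^ q * φR |x| :=
    integral_congr_ae (ae_of_all _ fun x => by simp only [φR_abs])
  rw [M, integral_γ, h2, hcomp]
  congr 1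
  simp_rw [φR_eq]
  rw [← integral_const_mul]
  exact setIntegral_congr_fun measurableSet_Ioi fun x _ => show
    x ^ q * ((Real.sqrt (2 * π))⁻¹ * rexp (-(1/2) * x ^ 2))
      = (Real.sqrt (2 * π))⁻¹ * (x ^ q * rexp (-(1/2) * x ^ 2)) from by ring

lemma Ioi_rec {q : ℝ} (hq : 0 ≤ q) :
    ∫ x in Ioi (0:ℝ), x ^ (q + 2) * rexp (-(1/2) * x ^ 2)
      = (q + 1) * ∫ x in Ioi (0:ℝ), x ^ q * rexp (-(1/2) * x ^ 2) := by
  have hb : (0:ℝ) < 1/2 := by norm_num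
  have h2 : (-1:ℝ) < q := by linarith
  have h2' : (-1:ℝ) < q + 2 := by linarith
  set f : ℝ → ℝ := fun x => x ^ (q+1) * rexp (-(1/2) * x ^ 2) with hf
  set g : ℝ → ℝ := fun x =>
    (q+1) * (x ^ q * rexp (-(1/2) * x ^ 2)) - x ^ (q+2) * rexp (-(1/2) * x ^ 2) with hg
  have hderiv : ∀ x ∈ Ioi (0:ℝ), HasDerivAt f (g x) x := by
    intro x hx
    have hx0 : x ≠ 0 := ne_of_gt hx
    have hd1 : HasDerivAt (fun y : ℝ => y ^ (q+1)) ((q+1) * x ^ (q+1-1)) x :=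
      Real.hasDerivAt_rpow_const (Or.inl hx0)
    have hd2 : HasDerivAt (fun y : ℝ => rexp (-(1/2) * y ^ 2))
        (rexp (-(1/2) * x ^ 2) * (-(1/2) * (2 * x ^ 1))) x :=
      (((hasDerivAt_pow 2 x).const_mul (-(1/2))).exp)
    have h3 := hd1.mul hd2
    refine (h3.congr_deriv ?_ : HasDerivAt f (g x) x); symm
    have e1 : x ^ (q + 1 - 1) = x ^ q := by norm_num
    have e2 : x ^ (q + 2) = x ^ (q + 1) * x := by
      rw [show q + 2 = (q + 1) + 1 by ring, Real.rpow_add_one hx0]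
    show (q+1) * (x ^ q * rexp (-(1/2) * x ^ 2)) - x ^ (q+2) * rexp (-(1/2) * x ^ 2) = _
    rw [e1, e2]
    ring
  have hcont : ContinuousWithinAt f (Ici (0:ℝ)) 0 := by
    apply Continuous.continuousWithinAt
    exact (continuous_iff_continuousAt.mpr fun x =>
        Real.continuousAt_rpow_const _ _ (Or.inr (by linarith))).mul
      (Real.continuous_exp.comp (continuous_const.mul (continuous_pow 2)))
  have htend : Filter.Tendsto f Filter.atTop (nhds 0) :=
    (rpow_mul_exp_neg_mul_sq_isLittleO_exp_neg hb (q+1)).tendsto_zero_of_tendsto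
      (Real.tendsto_exp_atBot.comp <|
        Filter.tendsto_id.const_mul_atTop_of_neg (neg_lt_zero.mpr one_half_pos))
  have hA := integrableOn_rpow_mul_exp_neg_mul_sq hb h2
  have hB := integrableOn_rpow_mul_exp_neg_mul_sq hb h2'
  have hint : IntegrableOn g (Ioi (0:ℝ)) volume := by
    have := (hA.const_mul (q+1)).sub hB
    exact this
  have hFTC := integral_Ioi_of_hasDerivAt_of_tendsto hcont hderiv hint htend
  have hf0 : f 0 = 0 := by
    rw [hf]
    simp [Real.zero_rpow (by linarith : q + 1 ≠ 0)]
  rw [hf0, sub_zero] at hFTC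
  have hsplit : ∫ x in Ioi (0:ℝ), g x
      = (q+1) * (∫ x in Ioi (0:ℝ), x ^ q * rexp (-(1/2) * x ^ 2))
        - ∫ x in Ioi (0:ℝ), x ^ (q+2) * rexp (-(1/2) * x ^ 2) := by
    rw [hg, integral_sub (hA.const_mul (q+1)) hB, integral_const_mul]
  rw [hsplit] at hFTC
  linarith

lemma M_rec {q : ℝ} (hq : 0 ≤ q) : M (q + 2) = (q + 1) * M q := by
  rw [M_eq, M_eq, Ioi_rec hq]
  ring

noncomputable def C (p : ℝ) (k : ℕ) : ℝ := ∏ j ∈ Finset.range k, (p + 1 + 2 * j)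

lemma C_pos {p : ℝ} (hp : 0 ≤ p) (k : ℕ) : 0 < C p k :=
  Finset.prod_pos fun j _ => by positivity

lemma M_closed {p : ℝ} (hp : 0 ≤ p) (k : ℕ) : M (p + 2 * k) = C p k * M p := by
  induction k with
  | zero => simp [C]
  | succ n ih =>
    have h1 : p + 2 * ((n + 1 : ℕ) : ℝ) = (p + 2 * n) + 2 := by push_cast; ring
    have h2 : (0:ℝ) ≤ p + 2 * n := by positivity
    rw [h1, M_rec h2, ih]
    simp only [C, Finset.prod_range_succ]
    ring

/-! ### Mixed moments -/

noncomputable def mterm (p : ℝ) (n : ℕ) : ℝ := ∫ x, |x| ^ p * x ^ n ∂γ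

lemma mterm_odd (p : ℝ) {n : ℕ} (hn : Odd n) : mterm p n = 0 := by
  have hvol : mterm p n = ∫ x, |x| ^ p * x ^ n * φR x := by
    rw [mterm, integral_γ]
  have key : (∫ x, |x| ^ p * x ^ n * φR x)
      = - ∫ x, |x| ^ p * x ^ n * φR x := by
    conv_lhs => rw [← integral_neg_eq_self (fun x => |x| ^ p * x ^ n * φR x) volume]
    rw [← integral_neg]
    congr 1
    funext x
    rw [abs_neg, φR_neg, hn.neg_pow]
    ring
  rw [hvol]
  linarith

lemma mterm_even {p : ℝ} (hp : 0 < p) (k : ℕ) : mterm p (2 * k) = M (p + 2 * k) := by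
  rw [mterm, M]
  congr 1
  funext x
  rcases eq_or_ne x 0 with rfl | hx
  · rcases Nat.eq_zero_or_pos k with rfl | hk
    · norm_num
    · have h1 : (0:ℝ) < p + 2 * k := by positivity
      simp [Real.zero_rpow hp.ne', Real.zero_rpow h1.ne', pow_eq_zero_iff, Nat.mul_ne_zero,
        hk.ne']
  · have habs : 0 < |x| := abs_pos.mpr hx
    have h1 : x ^ (2 * k) = |x| ^ ((2 * k : ℕ) : ℝ) := by
      rw [Real.rpow_natCast, pow_mul, pow_mul, sq_abs]
    rw [h1, ← Real.rpow_add habs]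
    congr 1
    push_cast
    ring

/-! ### The series expansion of `lam` -/

lemma tsum_exp_series (x : ℝ) : ∑' n : ℕ, x ^ n / n.factorial = rexp x := by
  rw [Real.exp_eq_exp_ℝ, NormedSpace.exp_eq_tsum_div]

lemma lam_eq {p : ℝ} (hp : 2 ≤ p) (s : ℝ) :
    lam p s = rexp (-(1/2) * s ^ 2) * ∑' n : ℕ, s ^ n / n.factorial * mterm p n := by
  have hp0 : (0:ℝ) ≤ p := by linarith
  have h1 : lam p s = ∫ u, |u| ^ p ∂(gaussianReal s 1) := by
    have hmap : (gaussianReal 0 1).map (· + s) = gaussianReal s 1 := by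
      rw [gaussianReal_map_add_const s, zero_add]
    have hm := integral_map (μ := gaussianReal 0 1) (φ := fun x => x + s)
      (measurable_add_const s).aemeasurable (f := fun u : ℝ => |u| ^ p)
      (continuous_abs_rpow hp0).aestronglyMeasurable
    rw [lam, γ, ← hmap]
    exact hm.symm
  have pdf_shift : ∀ u : ℝ, gaussianPDFReal s 1 u = φR u * rexp (s * u - (1/2) * s ^ 2) := by
    intro u
    simp only [φR, gaussianPDFReal, NNReal.coe_one, mul_one, sub_zero]
    rw [mul_assoc, ← Real.exp_add]
    congr 1
    rw [Real.exp_eq_exp]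
    ring
  have h2 : ∫ u, |u| ^ p ∂(gaussianReal s 1)
      = rexp (-(1/2) * s ^ 2) * ∫ u, |u| ^ p * rexp (s * u) * φR u := by
    rw [integral_gaussianReal, ← integral_const_mul]
    congr 1
    funext u
    rw [pdf_shift u]
    have e : rexp (s * u - (1/2) * s ^ 2) = rexp (s * u) * rexp (-(1/2) * s ^ 2) := by
      rw [← Real.exp_add]; congr 1; ring
    rw [e]
    ring
  have h4 : ∫ u, |u| ^ p * rexp (s * u) * φR u = ∫ u, |u| ^ p * rexp (s * u) ∂γ :=
    (integral_γ fun u => |u| ^ p * rexp (s * u)).symm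
  have hmeas : ∀ n : ℕ, AEStronglyMeasurable
      (fun u : ℝ => |u| ^ p * ((s * u) ^ n / n.factorial)) γ := by
    intro n
    exact ((continuous_abs_rpow hp0).mul
      (((continuous_const.mul continuous_id).pow n).div_const _)).aestronglyMeasurable
  have h5 : ∫ u, |u| ^ p * rexp (s * u) ∂γ = ∑' n : ℕ, s ^ n / n.factorial * mterm p n := by
    have hpt : ∀ u : ℝ, |u| ^ p * rexp (s * u)
        = ∑' n : ℕ, |u| ^ p * ((s * u) ^ n / n.factorial) := by
      intro u
      rw [← tsum_exp_series (s * u), tsum_mul_left]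
    have hfin : (∑' n : ℕ, ∫⁻ u, ‖|u| ^ p * ((s * u) ^ n / n.factorial)‖₊ ∂γ) ≠ ⊤ := by
      have hInt : Integrable (fun u => |u| ^ p * rexp (s * u) + |u| ^ p * rexp (-s * u)) γ :=
        (integrable_abs_rpow_exp hp0 s).add (integrable_abs_rpow_exp hp0 (-s))
      rw [← lintegral_tsum (fun n => (hmeas n).aemeasurable.nnnorm.coe_nnreal_ennreal)]
      have hle : ∀ u : ℝ, (∑' n : ℕ, (‖|u| ^ p * ((s * u) ^ n / n.factorial)‖₊ : ℝ≥0∞))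
          ≤ ENNReal.ofReal (|u| ^ p * rexp (s * u) + |u| ^ p * rexp (-s * u)) := by
        intro u
        have hru : (0:ℝ) ≤ |u| ^ p := Real.rpow_nonneg (abs_nonneg u) p
        have hsummable : Summable (fun n : ℕ => |u| ^ p * (|s * u| ^ n / n.factorial)) :=
          (Real.summable_pow_div_factorial |s * u|).mul_left _
        have heq : ∀ n : ℕ, (‖|u| ^ p * ((s * u) ^ n / n.factorial)‖₊ : ℝ≥0∞)
            = ENNReal.ofReal (|u| ^ p * (|s * u| ^ n / n.factorial)) := by
          intro n
          rw [← enorm_eq_nnnorm, Real.enorm_eq_ofReal_abs]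
          congr 1
          rw [abs_mul, abs_div, abs_pow, abs_of_nonneg hru, Nat.abs_cast]
        calc (∑' n : ℕ, (‖|u| ^ p * ((s * u) ^ n / n.factorial)‖₊ : ℝ≥0∞))
            = ∑' n : ℕ, ENNReal.ofReal (|u| ^ p * (|s * u| ^ n / n.factorial)) := by
              exact tsum_congr heq
          _ = ENNReal.ofReal (∑' n : ℕ, |u| ^ p * (|s * u| ^ n / n.factorial)) := by
              rw [ENNReal.ofReal_tsum_of_nonneg (fun n => by positivity) hsummable]
          _ ≤ ENNReal.ofReal (|u| ^ p * rexp (s * u) + |u| ^ p * rexp (-s * u)) := by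
              apply ENNReal.ofReal_le_ofReal
              rw [tsum_mul_left, tsum_exp_series]
              have hexp : rexp |s * u| ≤ rexp (s * u) + rexp (-s * u) := by
                rw [neg_mul]
                rcases abs_cases (s * u) with ⟨h, _⟩ | ⟨h, _⟩ <;> rw [h] <;>
                  linarith [(Real.exp_pos (-(s * u))).le, (Real.exp_pos (s * u)).le]
              calc |u| ^ p * rexp |s * u| ≤ |u| ^ p * (rexp (s * u) + rexp (-s * u)) :=
                    mul_le_mul_of_nonneg_left hexp hru
                _ = _ := by ring
      refine ne_top_of_le_ne_top hInt.2.ne ?_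
      calc ∫⁻ u, (∑' n : ℕ, (‖|u| ^ p * ((s * u) ^ n / n.factorial)‖₊ : ℝ≥0∞)) ∂γ
          ≤ ∫⁻ u, ENNReal.ofReal (|u| ^ p * rexp (s * u) + |u| ^ p * rexp (-s * u)) ∂γ :=
            lintegral_mono hle
        _ ≤ ∫⁻ u, (‖|u| ^ p * rexp (s * u) + |u| ^ p * rexp (-s * u)‖₊ : ℝ≥0∞) ∂γ :=
            lintegral_mono fun u => Real.ofReal_le_enorm _
    calc ∫ u, |u| ^ p * rexp (s * u) ∂γ
        = ∫ u, (∑' n : ℕ, |u| ^ p * ((s * u) ^ n / n.factorial)) ∂γ :=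
          integral_congr_ae (ae_of_all _ hpt)
      _ = ∑' n : ℕ, ∫ u, |u| ^ p * ((s * u) ^ n / n.factorial) ∂γ :=
          integral_tsum hmeas hfin
      _ = ∑' n : ℕ, s ^ n / n.factorial * mterm p n := by
          refine tsum_congr fun n => ?_
          have h : (fun u : ℝ => |u| ^ p * ((s * u) ^ n / n.factorial))
              = fun u => (s ^ n / n.factorial) * (|u| ^ p * u ^ n) := by
            funext u; rw [mul_pow]; ring
          rw [h, integral_const_mul, mterm]
  rw [h1, h2, h4, h5]

/-! ### Series lemmas -/

lemma summable_exp_series (x : ℝ) : Summable fun n : ℕ => x ^ n / n.factorial :=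
  Real.summable_pow_div_factorial x

lemma summable_mul_exp_series (x : ℝ) :
    Summable fun n : ℕ => (n : ℝ) * x ^ n / n.factorial := by
  rw [← summable_nat_add_iff 1]
  refine Summable.congr ((summable_exp_series x).mul_left x) fun n => ?_
  have h0 : ((n.factorial : ℕ) : ℝ) ≠ 0 := Nat.cast_ne_zero.mpr n.factorial_ne_zero
  rw [Nat.factorial_succ]
  push_cast
  field_simp
  ring

lemma tsum_mul_exp_series (x : ℝ) :
    ∑' n : ℕ, (n : ℝ) * x ^ n / n.factorial = x * rexp x := by
  rw [Summable.tsum_eq_zero_add (summable_mul_exp_series x)]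
  simp only [Nat.cast_zero, zero_mul, zero_div, zero_add]
  have h : ∀ n : ℕ, ((n + 1 : ℕ) : ℝ) * x ^ (n + 1) / ((n + 1 : ℕ).factorial : ℝ)
      = x * (x ^ n / n.factorial) := by
    intro n
    have h0 : ((n.factorial : ℕ) : ℝ) ≠ 0 := Nat.cast_ne_zero.mpr n.factorial_ne_zero
    rw [Nat.factorial_succ]
    push_cast
    field_simp
    ring
  rw [tsum_congr h, tsum_mul_left, tsum_exp_series]

/-! ### Coefficient inequalities -/

lemma C_le {p : ℝ} (hp : 2 ≤ p) (k : ℕ) : C p k ≤ (p + 3) ^ k * k.factorial := by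
  induction k with
  | zero => simp [C]
  | succ n ih =>
    have h0 : (0:ℝ) ≤ p := by linarith
    have h1 : p + 1 + 2 * (n:ℝ) ≤ (p + 3) * ((n:ℝ) + 1) := by
      nlinarith [Nat.cast_nonneg (α := ℝ) n]
    have h2 : (0:ℝ) ≤ p + 1 + 2 * (n:ℝ) := by positivity
    have h3 : (0:ℝ) ≤ p + 3 := by linarith
    have h4 : (0:ℝ) ≤ (p + 3) ^ n * (n.factorial : ℝ) :=
      mul_nonneg (pow_nonneg h3 n) (by positivity)
    have hCsucc : C p (n+1) = C p n * (p + 1 + 2 * (n:ℝ)) := by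
      simp only [C, Finset.prod_range_succ]
    rw [hCsucc]
    calc C p n * (p + 1 + 2 * (n:ℝ))
        ≤ ((p + 3) ^ n * (n.factorial : ℝ)) * ((p + 3) * ((n:ℝ) + 1)) :=
          mul_le_mul ih h1 h2 h4
      _ = (p + 3) ^ (n+1) * (((n:ℝ) + 1) * (n.factorial : ℝ)) := by ring
      _ = (p + 3) ^ (n+1) * (((n+1).factorial : ℕ) : ℝ) := by
          rw [Nat.factorial_succ]; push_cast; ring

lemma C_ge {p : ℝ} (hp : 2 ≤ p) (k : ℕ) :
    (1 + p * k) * (((2 * k).factorial : ℕ) : ℝ) ≤ C p k * (2 ^ k * (k.factorial : ℝ)) := by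
  induction k with
  | zero => simp [C]
  | succ n ih =>
    have h0 : (0:ℝ) ≤ p := by linarith
    have hA : (0:ℝ) ≤ (((2*n).factorial : ℕ) : ℝ) := by positivity
    have hfac : (((2 * (n+1)).factorial : ℕ) : ℝ)
        = (2*(n:ℝ)+2) * ((2*(n:ℝ)+1) * (((2*n).factorial : ℕ) : ℝ)) := by
      have he : 2 * (n+1) = (2*n + 1) + 1 := by ring
      rw [he, Nat.factorial_succ, Nat.factorial_succ]
      push_cast
      ring
    have hstep : (1 + p*((n:ℝ)+1)) * (2*(n:ℝ)+1) ≤ (1 + p*(n:ℝ)) * (p + 1 + 2*(n:ℝ)) := by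
      nlinarith [mul_nonneg (mul_nonneg (by linarith : (0:ℝ) ≤ p) (Nat.cast_nonneg (α := ℝ) n))
        (by linarith : (0:ℝ) ≤ p - 2)]
    have hp1 : (0:ℝ) ≤ p + 1 + 2*(n:ℝ) := by positivity
    have hCsucc : C p (n+1) = C p n * (p + 1 + 2 * (n:ℝ)) := by
      simp only [C, Finset.prod_range_succ]
    rw [hCsucc]
    calc (1 + p * ((n+1 : ℕ) : ℝ)) * (((2*(n+1)).factorial : ℕ) : ℝ)
        = (1 + p*((n:ℝ)+1)) * (2*(n:ℝ)+1) * (((2*n).factorial : ℕ) : ℝ) * (2*(n:ℝ)+2) := by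
          rw [hfac]; push_cast; ring
      _ ≤ (1 + p*(n:ℝ)) * (p + 1 + 2*(n:ℝ)) * (((2*n).factorial : ℕ) : ℝ) * (2*(n:ℝ)+2) :=
          mul_le_mul_of_nonneg_right (mul_le_mul_of_nonneg_right hstep hA) (by positivity)
      _ = ((1 + p*(n:ℝ)) * (((2*n).factorial : ℕ) : ℝ)) * ((p + 1 + 2*(n:ℝ)) * (2*(n:ℝ)+2)) := by
          ring
      _ ≤ (C p n * (2 ^ n * ((n.factorial : ℕ) : ℝ))) * ((p + 1 + 2*(n:ℝ)) * (2*(n:ℝ)+2)) :=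
          mul_le_mul_of_nonneg_right ih (by positivity)
      _ = C p n * (p + 1 + 2*(n:ℝ)) * (2 ^ (n+1) * (((n:ℝ)+1) * ((n.factorial : ℕ) : ℝ))) := by
          ring
      _ = C p n * (p + 1 + 2*(n:ℝ)) * (2 ^ (n+1) * (((n+1).factorial : ℕ) : ℝ)) := by
          rw [Nat.factorial_succ]; push_cast; ring

end Stmt8Aux

open Stmt8Aux

/-- For `p ∈ [2,∞)` and all real `s`, `λ_p(s) − λ_p(0) ≥ (p/2)·λ_p(0)·s²`, strictly if
`p > 2` and `s ≠ 0`. -/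
theorem stmt8 (p : ℝ) (hp : 2 ≤ p) (s : ℝ) :
    p / 2 * lam p 0 * s ^ 2 ≤ lam p s - lam p 0 ∧
    (2 < p → s ≠ 0 → p / 2 * lam p 0 * s ^ 2 < lam p s - lam p 0) := by
  have hp0 : (0:ℝ) < p := by linarith
  have hM0 : 0 < M p := M_pos hp0
  have hfq : ∀ n : ℕ, (0:ℝ) < ((n.factorial : ℕ) : ℝ) := fun n => by
    exact_mod_cast n.factorial_pos
  set x : ℝ := s ^ 2 / 2 with hxdef
  have hx0 : (0:ℝ) ≤ x := by rw [hxdef]; positivity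
  set t : ℕ → ℝ := fun k => (C p k / (((2 * k).factorial : ℕ) : ℝ)) * ((s ^ 2) ^ k * M p)
    with htdef
  set l : ℕ → ℝ := fun k => ((1 + p * k) / (2 ^ k * ((k.factorial : ℕ) : ℝ)))
    * ((s ^ 2) ^ k * M p) with hldef
  have hcmp : ∀ k : ℕ, (1 + p * k) / (2 ^ k * ((k.factorial : ℕ) : ℝ))
      ≤ C p k / (((2 * k).factorial : ℕ) : ℝ) := by
    intro k
    rw [div_le_div_iff₀ (by positivity) (hfq _)]
    linarith [C_ge hp k]
  have hl_le : ∀ k, l k ≤ t k := fun k => by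
    rw [hldef, htdef]
    exact mul_le_mul_of_nonneg_right (hcmp k) (by positivity)
  have ht_nonneg : ∀ k, 0 ≤ t k := fun k => by
    rw [htdef]
    have h1 := (C_pos (by linarith : (0:ℝ) ≤ p) k).le
    positivity
  have hsum_l : Summable l := by
    refine Summable.congr (((summable_exp_series x).mul_left (M p)).add
      ((summable_mul_exp_series x).mul_left (p * M p))) fun k => ?_
    have h1 : ((k.factorial : ℕ) : ℝ) ≠ 0 := (hfq k).ne'
    have h2 : ((2:ℝ)) ^ k ≠ 0 := by positivity
    rw [hldef, hxdef]
    simp only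
    rw [div_pow]
    field_simp
  have hsum_t : Summable t := by
    refine Summable.of_nonneg_of_le ht_nonneg (fun k => ?_)
      ((summable_exp_series ((p + 3) * s ^ 2)).mul_left (M p))
    have hC := C_le hp k
    have hff : ((k.factorial : ℕ) : ℝ) * ((k.factorial : ℕ) : ℝ)
        ≤ (((2 * k).factorial : ℕ) : ℝ) := by
      have h := Nat.factorial_mul_factorial_dvd_factorial_add k k
      have h2 := Nat.le_of_dvd (Nat.factorial_pos _) h
      have h3 : k + k = 2 * k := by ring
      rw [h3] at h2
      exact_mod_cast h2
    have h3 : (0:ℝ) ≤ p + 3 := by linarith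
    have hkey : C p k / (((2 * k).factorial : ℕ) : ℝ) ≤ (p + 3) ^ k / ((k.factorial : ℕ) : ℝ) := by
      rw [div_le_div_iff₀ (hfq _) (hfq _)]
      calc C p k * ((k.factorial : ℕ) : ℝ)
          ≤ ((p + 3) ^ k * ((k.factorial : ℕ) : ℝ)) * ((k.factorial : ℕ) : ℝ) :=
            mul_le_mul_of_nonneg_right hC (hfq _).le
        _ = (p + 3) ^ k * (((k.factorial : ℕ) : ℝ) * ((k.factorial : ℕ) : ℝ)) := by ring
        _ ≤ (p + 3) ^ k * (((2 * k).factorial : ℕ) : ℝ) :=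
            mul_le_mul_of_nonneg_left hff (pow_nonneg h3 k)
    calc t k ≤ ((p + 3) ^ k / ((k.factorial : ℕ) : ℝ)) * ((s ^ 2) ^ k * M p) := by
          rw [htdef]
          exact mul_le_mul_of_nonneg_right hkey (by positivity)
      _ = M p * (((p + 3) * s ^ 2) ^ k / ((k.factorial : ℕ) : ℝ)) := by
          rw [mul_pow]; ring
  have htsum_l : (∑' k, l k) = M p * rexp x + (p * M p) * (x * rexp x) := by
    have hrepr : l = fun k : ℕ => M p * (x ^ k / (k.factorial : ℝ))
        + (p * M p) * ((k : ℝ) * x ^ k / (k.factorial : ℝ)) := by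
      funext k
      have h1 : ((k.factorial : ℕ) : ℝ) ≠ 0 := (hfq k).ne'
      have h2 : ((2:ℝ)) ^ k ≠ 0 := by positivity
      rw [hldef, hxdef]
      simp only
      rw [div_pow]
      field_simp
    rw [hrepr, Summable.tsum_add ((summable_exp_series x).mul_left (M p))
      ((summable_mul_exp_series x).mul_left (p * M p)),
      tsum_mul_left, tsum_mul_left, tsum_exp_series, tsum_mul_exp_series]
  have hlam_s : lam p s = rexp (-(1/2) * s ^ 2) * ∑' k, t k := by
    rw [lam_eq hp s]
    congr 1
    have hinj : Function.Injective (fun k : ℕ => 2 * k) := fun a b h => by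
      simp only at h; omega
    have hsupp : Function.support (fun n : ℕ => s ^ n / (n.factorial : ℝ) * mterm p n)
        ⊆ range (fun k : ℕ => 2 * k) := by
      intro n hn
      rcases Nat.even_or_odd n with he | ho
      · obtain ⟨r, hr⟩ := he
        exact ⟨r, by simp only; omega⟩
      · exfalso
        apply hn
        show s ^ n / (n.factorial : ℝ) * mterm p n = 0
        rw [mterm_odd p ho, mul_zero]
    rw [← Function.Injective.tsum_eq hinj hsupp]
    refine tsum_congr fun k => ?_
    show s ^ (2 * k) / (((2 * k).factorial : ℕ) : ℝ) * mterm p (2 * k) = t k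
    rw [mterm_even hp0 k, M_closed (by linarith : (0:ℝ) ≤ p) k, htdef]
    simp only
    rw [pow_mul]
    ring
  have hprod : rexp (-(1/2) * s ^ 2) * (M p * rexp x + (p * M p) * (x * rexp x))
      = M p * (1 + p * x) := by
    have hxeq : -(1/2) * s ^ 2 = -x := by rw [hxdef]; ring
    have hee : rexp (-x) * rexp x = 1 := by rw [← Real.exp_add]; simp
    calc rexp (-(1/2) * s ^ 2) * (M p * rexp x + (p * M p) * (x * rexp x))
        = (rexp (-x) * rexp x) * (M p * (1 + p * x)) := by rw [hxeq]; ring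
      _ = M p * (1 + p * x) := by rw [hee, one_mul]
  have hexp_pos : (0:ℝ) < rexp (-(1/2) * s ^ 2) := Real.exp_pos _
  have hlam0 : lam p 0 = M p := by
    unfold lam M
    norm_num
  have hx2 : p / 2 * M p * s ^ 2 = M p * (p * x) := by rw [hxdef]; ring
  have hexpand : M p * (1 + p * x) = M p + M p * (p * x) := by ring
  constructor
  · have hTle : (∑' k, l k) ≤ ∑' k, t k := Summable.tsum_le_tsum hl_le hsum_l hsum_t
    have hge : M p * (1 + p * x) ≤ lam p s := by
      rw [hlam_s, ← hprod, ← htsum_l]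
      exact mul_le_mul_of_nonneg_left hTle hexp_pos.le
    rw [hlam0, hx2]
    linarith
  · intro hp2 hs
    have hl2t : l 2 < t 2 := by
      have hc2 : C p 2 = (p + 1) * (p + 1 + 2) := by
        simp [C, Finset.prod_range_succ]
      have hpos2 : (0:ℝ) < (s ^ 2) ^ 2 * M p := by positivity
      rw [hldef, htdef]
      simp only
      refine mul_lt_mul_of_pos_right ?_ hpos2
      rw [div_lt_div_iff₀ (by positivity) (hfq _)]
      rw [hc2]
      norm_num [Nat.factorial]
      nlinarith
    have hTlt : (∑' k, l k) < ∑' k, t k := Summable.tsum_lt_tsum hl_le hl2t hsum_l hsum_t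
    have hgt : M p * (1 + p * x) < lam p s := by
      rw [hlam_s, ← hprod, ← htsum_l]
      exact mul_lt_mul_of_pos_left hTlt hexp_pos
    rw [hlam0, hx2]
    linarith
end
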